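/- arXiv:1601.00962 — 5 statements merged into one kernel-verified Lean document; each statement's English description precedes it below -/
import Mathlib

section
/- Let ρ be a two-qubit state with correlation matrix T, and let λ1 ≥ λ2 be the two largest eigenvalues of the real symmetric matrix T * Tᵀ. Then 2·√(λ1+λ2) is the greatest element of the set of analog CHSH values of ρ taken over all unit vectors a1, a2 and all linearly independent unit vectors b1, b2 (with their dual basis b1', b2'): every such analog CHSH value is at most 2·√(λ1+λ2), and the value 2·√(λ1+λ2) is attained for some choice (indeed with b1, b2 orthonormal). -/
open Matrix Polynomial
open scoped Kronecker Matrix ComplexOrder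

noncomputable section

/-- Pauli matrix σ1. -/
def σ₁ : Matrix (Fin 2) (Fin 2) ℂ := !![0, 1; 1, 0]
/-- Pauli matrix σ2. -/
def σ₂ : Matrix (Fin 2) (Fin 2) ℂ := !![0, -Complex.I; Complex.I, 0]
/-- Pauli matrix σ3. -/
def σ₃ : Matrix (Fin 2) (Fin 2) ℂ := !![1, 0; 0, -1]

/-- The three Pauli matrices. -/
def pauli : Fin 3 → Matrix (Fin 2) (Fin 2) ℂ := ![σ₁, σ₂, σ₃]

/-- `v·σ` for a real 3-vector `v`. -/
def pauliVec (v : EuclideanSpace ℝ (Fin 3)) : Matrix (Fin 2) (Fin 2) ℂ :=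
  (v 0 : ℂ) • σ₁ + (v 1 : ℂ) • σ₂ + (v 2 : ℂ) • σ₃

/-- Full correlation `E = Re tr(ρ ((a·σ) ⊗ₖ (b·σ)))`. -/
def corrE (ρ : Matrix (Fin 2 × Fin 2) (Fin 2 × Fin 2) ℂ)
    (a b : EuclideanSpace ℝ (Fin 3)) : ℝ :=
  ((ρ * (pauliVec a ⊗ₖ pauliVec b)).trace).re

/-- Correlation matrix `T i j = Re tr(ρ (σᵢ ⊗ₖ σⱼ))` of a two-qubit state. -/
def corrMatrix (ρ : Matrix (Fin 2 × Fin 2) (Fin 2 × Fin 2) ℂ) : Matrix (Fin 3) (Fin 3) ℝ :=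
  fun i j => ((ρ * (pauli i ⊗ₖ pauli j)).trace).re

/-- The CHSH value `E(1,1) + E(2,1) + E(1,2) − E(2,2)` of `ρ` at `(a1,a2,b1,b2)`. -/
def CHSHval (ρ : Matrix (Fin 2 × Fin 2) (Fin 2 × Fin 2) ℂ)
    (a1 a2 b1 b2 : EuclideanSpace ℝ (Fin 3)) : ℝ :=
  corrE ρ a1 b1 + corrE ρ a2 b1 + corrE ρ a1 b2 - corrE ρ a2 b2

/-- The real inner product on `EuclideanSpace ℝ (Fin 3)`. -/
def rip (x y : EuclideanSpace ℝ (Fin 3)) : ℝ := inner ℝ x y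

/-- Action of a real 3×3 matrix on a Euclidean 3-vector. -/
def matVec (T : Matrix (Fin 3) (Fin 3) ℝ) (v : EuclideanSpace ℝ (Fin 3)) :
    EuclideanSpace ℝ (Fin 3) :=
  (EuclideanSpace.equiv (Fin 3) ℝ).symm (T.mulVec (EuclideanSpace.equiv (Fin 3) ℝ v))

/-- `b1', b2'` is the dual basis of the pair `b1, b2` inside `span{b1, b2}`:
`⟪b'_m, b_n⟫ = δ_{mn}`. -/
def IsDualPair (b1 b2 b1' b2' : EuclideanSpace ℝ (Fin 3)) : Prop :=
  b1' ∈ Submodule.span ℝ ({b1, b2} : Set (EuclideanSpace ℝ (Fin 3))) ∧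
  b2' ∈ Submodule.span ℝ ({b1, b2} : Set (EuclideanSpace ℝ (Fin 3))) ∧
  rip b1' b1 = 1 ∧ rip b1' b2 = 0 ∧ rip b2' b1 = 0 ∧ rip b2' b2 = 1

/-- The analog CHSH value of `ρ` at `(a1,a2,b1,b2)`, with `b1', b2'` the dual basis of
`b1, b2`. -/
def ACHSHval (ρ : Matrix (Fin 2 × Fin 2) (Fin 2 × Fin 2) ℂ)
    (a1 a2 b1 b2 b1' b2' : EuclideanSpace ℝ (Fin 3)) : ℝ :=
  ‖(corrE ρ a1 b1 + corrE ρ a2 b1) • b1' + (corrE ρ a1 b2 + corrE ρ a2 b2) • b2'‖ +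
  ‖(corrE ρ a1 b1 - corrE ρ a2 b1) • b1' + (corrE ρ a1 b2 - corrE ρ a2 b2) • b2'‖

/-- A family `P a m` (outcome `a`, setting `m`) of 2×2 matrices admits a finite
local-hidden-state model. -/
def HasLHSModel (P : Fin 2 → Fin 2 → Matrix (Fin 2) (Fin 2) ℂ) : Prop :=
  ∃ (N : ℕ) (τ : Fin N → Matrix (Fin 2) (Fin 2) ℂ) (q : Fin 2 → Fin 2 → Fin N → ℝ),
    (∀ lam, (τ lam).PosSemidef) ∧
    (∀ a m lam, 0 ≤ q a m lam ∧ q a m lam ≤ 1) ∧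
    (∀ m lam, q 0 m lam + q 1 m lam = 1) ∧
    (∀ a m, P a m = ∑ lam, q a m lam • τ lam)

/-- Full correlations `E m n` admit a finite LHV-LHS model with respect to Bob's
measurement vectors `b 0, b 1`. -/
def HasLHVLHSModel (E : Fin 2 → Fin 2 → ℝ) (b : Fin 2 → EuclideanSpace ℝ (Fin 3)) : Prop :=
  ∃ (N : ℕ) (p : Fin N → ℝ) (e : Fin 2 → Fin N → ℝ)
    (ρs : Fin N → Matrix (Fin 2) (Fin 2) ℂ),
    (∀ lam, 0 ≤ p lam) ∧ (∑ lam, p lam = 1) ∧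
    (∀ m lam, e m lam ∈ Set.Icc (-1 : ℝ) 1) ∧
    (∀ lam, (ρs lam).PosSemidef ∧ (ρs lam).trace = 1) ∧
    (∀ m n, E m n = ∑ lam, p lam * e m lam * ((ρs lam * pauliVec (b n)).trace).re)

/-- Full correlations `E m n` admit a finite LHV model. -/
def HasLHVModel (E : Fin 2 → Fin 2 → ℝ) : Prop :=
  ∃ (N : ℕ) (p : Fin N → ℝ) (e f : Fin 2 → Fin N → ℝ),
    (∀ lam, 0 ≤ p lam) ∧ (∑ lam, p lam = 1) ∧
    (∀ m lam, e m lam ∈ Set.Icc (-1 : ℝ) 1) ∧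
    (∀ n lam, f n lam ∈ Set.Icc (-1 : ℝ) 1) ∧
    (∀ m n, E m n = ∑ lam, p lam * e m lam * f n lam)

/-- The effect `(1/2)(I + (−1)^i v·σ)` of the projective measurement along `v`. -/
def effect (v : EuclideanSpace ℝ (Fin 3)) (i : Fin 2) : Matrix (Fin 2) (Fin 2) ℂ :=
  (1/2 : ℝ) • ((1 : Matrix (Fin 2) (Fin 2) ℂ) + ((-1 : ℝ) ^ (i : ℕ)) • pauliVec v)


section AuxLemmas

open Finset in
private lemma aux_charmatrix_diagonal {n : Type*} [Fintype n] [DecidableEq n] (d : n → ℝ) :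
    (Matrix.diagonal d).charmatrix = Matrix.diagonal (fun i => (X : ℝ[X]) - C (d i)) := by
  ext i j
  by_cases h : i = j
  · subst h; simp [Matrix.charmatrix_apply_eq]
  · simp [Matrix.charmatrix_apply_ne _ _ _ h, Matrix.diagonal_apply_ne _ h]

private lemma aux_charpoly_hermitian {n : Type*} [Fintype n] [DecidableEq n]
    {M : Matrix n n ℝ} (hM : M.IsHermitian) :
    M.charpoly = ∏ i, (X - C (hM.eigenvalues i)) := by
  classical
  set U : Matrix n n ℝ := (hM.eigenvectorUnitary : Matrix n n ℝ) with hU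
  have hUU : U * star U = 1 := (Matrix.mem_unitaryGroup_iff).mp hM.eigenvectorUnitary.2
  have hspec : M = U * Matrix.diagonal hM.eigenvalues * star U := by
    have := hM.spectral_theorem
    simpa using this
  have hmap : ∀ (A B : Matrix n n ℝ), (C : ℝ →+* ℝ[X]).mapMatrix (A * B)
      = (C : ℝ →+* ℝ[X]).mapMatrix A * (C : ℝ →+* ℝ[X]).mapMatrix B := fun A B => by
    exact _root_.map_mul (RingHom.mapMatrix (C : ℝ →+* ℝ[X])) A B
  have hscal : (Matrix.scalar n) (X : ℝ[X]) = (X : ℝ[X]) • (1 : Matrix n n ℝ[X]) := by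
    rw [Matrix.smul_one_eq_diagonal]; rfl
  have key : (C : ℝ →+* ℝ[X]).mapMatrix U * (Matrix.diagonal hM.eigenvalues).charmatrix *
        (C : ℝ →+* ℝ[X]).mapMatrix (star U) = M.charmatrix := by
    rw [Matrix.charmatrix, Matrix.charmatrix, mul_sub, sub_mul]
    congr 1
    · rw [hscal, mul_smul_comm, smul_mul_assoc, mul_one, ← hmap, hUU]
      simp
    · rw [← hmap, ← hmap]
      exact congrArg _ hspec.symm
  have hUdet : U.det * (star U).det = 1 := by
    rw [← Matrix.det_mul, hUU, Matrix.det_one]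
  have hdet : M.charpoly = (Matrix.diagonal hM.eigenvalues).charpoly := by
    rw [Matrix.charpoly, ← key, Matrix.det_mul, Matrix.det_mul, Matrix.charpoly]
    rw [← RingHom.map_det, ← RingHom.map_det]
    rw [mul_comm ((C : ℝ →+* ℝ[X]) U.det), mul_assoc, ← C_mul, hUdet]
    simp
  rw [hdet, Matrix.charpoly, aux_charmatrix_diagonal, Matrix.det_diagonal]

private lemma aux_pauliVec_eq_sum (v : EuclideanSpace ℝ (Fin 3)) :
    pauliVec v = ∑ i : Fin 3, (v i : ℂ) • pauli i := by
  simp [pauliVec, pauli, Fin.sum_univ_three]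

private lemma aux_corrE_eq_sum (ρ : Matrix (Fin 2 × Fin 2) (Fin 2 × Fin 2) ℂ)
    (a b : EuclideanSpace ℝ (Fin 3)) :
    corrE ρ a b = ∑ i : Fin 3, ∑ j : Fin 3, a i * b j * corrMatrix ρ i j := by
  unfold corrE
  rw [aux_pauliVec_eq_sum, aux_pauliVec_eq_sum]
  rw [show (∑ i : Fin 3, (a i : ℂ) • pauli i) ⊗ₖ (∑ j : Fin 3, (b j : ℂ) • pauli j)
      = ∑ i : Fin 3, ∑ j : Fin 3, ((a i : ℂ) * (b j : ℂ)) • (pauli i ⊗ₖ pauli j) by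
    ext ⟨p1, p2⟩ ⟨q1, q2⟩
    simp only [Matrix.kroneckerMap_apply, Matrix.sum_apply, Matrix.smul_apply, smul_eq_mul,
      Finset.sum_mul_sum]
    refine Finset.sum_congr rfl fun i _ => Finset.sum_congr rfl fun j _ => by ring]
  rw [Finset.mul_sum]
  simp_rw [Finset.mul_sum, Matrix.mul_smul, Matrix.trace_sum, Matrix.trace_smul]
  rw [Complex.re_sum]
  refine Finset.sum_congr rfl fun i _ => ?_
  rw [Complex.re_sum]
  refine Finset.sum_congr rfl fun j _ => ?_
  rw [smul_eq_mul, ← Complex.ofReal_mul, Complex.re_ofReal_mul]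
  rfl

private lemma aux_rip_eq_dot (x y : EuclideanSpace ℝ (Fin 3)) :
    rip x y = (x : Fin 3 → ℝ) ⬝ᵥ (y : Fin 3 → ℝ) := by
  simp [rip, PiLp.inner_apply, dotProduct, RCLike.inner_apply, conj_trivial]
  exact Finset.sum_congr rfl fun _ _ => mul_comm _ _

private lemma aux_rip_comm (x y : EuclideanSpace ℝ (Fin 3)) : rip x y = rip y x :=
  real_inner_comm y x

private lemma aux_matVec_coe (T : Matrix (Fin 3) (Fin 3) ℝ) (v : EuclideanSpace ℝ (Fin 3)) :
    (matVec T v : Fin 3 → ℝ) = T.mulVec (v : Fin 3 → ℝ) := rfl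

private lemma aux_matVec_add (T : Matrix (Fin 3) (Fin 3) ℝ) (v w : EuclideanSpace ℝ (Fin 3)) :
    matVec T (v + w) = matVec T v + matVec T w := by
  apply PiLp.ext; intro i
  simp [matVec, Matrix.mulVec_add]

private lemma aux_matVec_sub (T : Matrix (Fin 3) (Fin 3) ℝ) (v w : EuclideanSpace ℝ (Fin 3)) :
    matVec T (v - w) = matVec T v - matVec T w := by
  apply PiLp.ext; intro i
  simp [matVec, Matrix.mulVec_sub]

private lemma aux_matVec_smul (T : Matrix (Fin 3) (Fin 3) ℝ) (c : ℝ) (v : EuclideanSpace ℝ (Fin 3)) :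
    matVec T (c • v) = c • matVec T v := by
  apply PiLp.ext; intro i
  simp [matVec, Matrix.mulVec_smul]

private lemma aux_rip_matVec_matVec (T : Matrix (Fin 3) (Fin 3) ℝ) (x y : EuclideanSpace ℝ (Fin 3)) :
    rip (matVec Tᵀ x) (matVec Tᵀ y) = rip x (matVec (T * Tᵀ) y) := by
  rw [aux_rip_eq_dot, aux_rip_eq_dot, aux_matVec_coe, aux_matVec_coe, aux_matVec_coe]
  rw [← Matrix.mulVec_mulVec, Matrix.dotProduct_mulVec x, Matrix.mulVec_transpose]

private lemma aux_corrE_eq_rip (ρ : Matrix (Fin 2 × Fin 2) (Fin 2 × Fin 2) ℂ)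
    (a b : EuclideanSpace ℝ (Fin 3)) :
    corrE ρ a b = rip (matVec (corrMatrix ρ)ᵀ a) b := by
  rw [aux_corrE_eq_sum, aux_rip_eq_dot, aux_matVec_coe]
  simp only [Matrix.mulVec, dotProduct, Matrix.transpose_apply, Finset.sum_mul]
  rw [Finset.sum_comm]
  exact Finset.sum_congr rfl fun j _ => Finset.sum_congr rfl fun i _ => by ring

private lemma aux_cs2 (p q r s : ℝ) (hp : 0 ≤ p) (hq : 0 ≤ q) (hr : 0 ≤ r) (hs : 0 ≤ s) :
    p * q + r * s ≤ Real.sqrt (p^2 + r^2) * Real.sqrt (q^2 + s^2) := by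
  rw [← Real.sqrt_mul (by positivity)]
  rw [show p * q + r * s = Real.sqrt ((p*q + r*s)^2) by
    rw [Real.sqrt_sq (by positivity)]]
  apply Real.sqrt_le_sqrt
  nlinarith [sq_nonneg (p * s - r * q)]

private lemma aux_bessel2 (x y e : EuclideanSpace ℝ (Fin 3)) (hx : ‖x‖ = 1) (hy : ‖y‖ = 1)
    (hxy : rip x y = 0) : rip x e ^ 2 + rip y e ^ 2 ≤ ‖e‖ ^ 2 := by
  have ixx : (inner ℝ x x : ℝ) = 1 := by
    rw [real_inner_self_eq_norm_sq, hx]; norm_num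
  have iyy : (inner ℝ y y : ℝ) = 1 := by
    rw [real_inner_self_eq_norm_sq, hy]; norm_num
  have ixy : (inner ℝ x y : ℝ) = 0 := hxy
  have iyx : (inner ℝ y x : ℝ) = 0 := by rw [real_inner_comm]; exact hxy
  have h0 : (0:ℝ) ≤ rip (e - (rip x e • x + rip y e • y)) (e - (rip x e • x + rip y e • y)) :=
    real_inner_self_nonneg
  have hexp : rip (e - (rip x e • x + rip y e • y)) (e - (rip x e • x + rip y e • y))
      = rip e e - rip x e ^ 2 - rip y e ^ 2 := by
    simp only [rip, inner_sub_left, inner_sub_right, inner_add_left, inner_add_right,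
      real_inner_smul_left, real_inner_smul_right, ixx, iyy, ixy, iyx]
    rw [real_inner_comm e x, real_inner_comm e y]
    ring
  have hee : rip e e = ‖e‖ ^ 2 := real_inner_self_eq_norm_sq e
  rw [hexp, hee] at h0
  linarith

private lemma aux_dual_bound (b1 b2 b1' b2' w : EuclideanSpace ℝ (Fin 3))
    (h : IsDualPair b1 b2 b1' b2') :
    ‖rip w b1 • b1' + rip w b2 • b2'‖ ≤ ‖w‖ := by
  obtain ⟨hs1, hs2, h11, h12, h21, h22⟩ := h
  set X := rip w b1 • b1' + rip w b2 • b2' with hX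
  have hXmem : X ∈ Submodule.span ℝ ({b1, b2} : Set (EuclideanSpace ℝ (Fin 3))) :=
    Submodule.add_mem _ (Submodule.smul_mem _ _ hs1) (Submodule.smul_mem _ _ hs2)
  obtain ⟨s, t, hst⟩ := Submodule.mem_span_pair.mp hXmem
  have hXb1 : rip X b1 = rip w b1 := by
    have e1 : rip X b1 = rip w b1 * rip b1' b1 + rip w b2 * rip b2' b1 := by
      simp only [rip, hX, inner_add_left, real_inner_smul_left]
    rw [e1, h11, h21]; ring
  have hXb2 : rip X b2 = rip w b2 := by
    have e1 : rip X b2 = rip w b1 * rip b1' b2 + rip w b2 * rip b2' b2 := by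
      simp only [rip, hX, inner_add_left, real_inner_smul_left]
    rw [e1, h12, h22]; ring
  have expand : ∀ z : EuclideanSpace ℝ (Fin 3), rip z X = s * rip z b1 + t * rip z b2 := by
    intro z
    rw [← hst]
    simp only [rip, inner_add_right, real_inner_smul_right]
  have key : rip X X = rip w X := by
    rw [expand X, expand w, hXb1, hXb2]
  have hcs : rip w X ≤ ‖w‖ * ‖X‖ := real_inner_le_norm w X
  have hXX : rip X X = ‖X‖ ^ 2 := real_inner_self_eq_norm_sq X
  rcases eq_or_lt_of_le (norm_nonneg X) with h0 | h0
  · rw [← h0]; exact norm_nonneg w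
  · have hmul : ‖X‖ * ‖X‖ ≤ ‖w‖ * ‖X‖ := by nlinarith
    exact le_of_mul_le_mul_right hmul h0

private lemma aux_exists_unit_orth (x y : EuclideanSpace ℝ (Fin 3)) :
    ∃ z : EuclideanSpace ℝ (Fin 3), ‖z‖ = 1 ∧ rip x z = 0 ∧ rip y z = 0 := by
  classical
  set K := Submodule.span ℝ ({x, y} : Set (EuclideanSpace ℝ (Fin 3))) with hK
  have hrank : Module.finrank ℝ K ≤ 2 := by
    refine le_trans (finrank_span_le_card ({x, y} : Set (EuclideanSpace ℝ (Fin 3)))) ?_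
    rw [Set.toFinset_insert, Set.toFinset_singleton]
    exact le_trans (Finset.card_insert_le _ _) (by simp)
  have hne : Kᗮ ≠ ⊥ := by
    intro hbot
    have htop : K = ⊤ := Submodule.orthogonal_eq_bot_iff.mp hbot
    rw [htop] at hrank
    rw [finrank_top] at hrank
    rw [finrank_euclideanSpace_fin] at hrank
    omega
  obtain ⟨z0, hz0mem, hz0⟩ := Submodule.ne_bot_iff _ |>.mp hne
  refine ⟨(‖z0‖ : ℝ)⁻¹ • z0, ?_, ?_, ?_⟩
  · have := norm_smul_inv_norm (𝕜 := ℝ) hz0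
    simpa using this
  · have hz1 : (‖z0‖ : ℝ)⁻¹ • z0 ∈ Kᗮ := Submodule.smul_mem _ _ hz0mem
    exact (Submodule.mem_orthogonal K _).mp hz1 x (Submodule.subset_span (by simp))
  · have hz1 : (‖z0‖ : ℝ)⁻¹ • z0 ∈ Kᗮ := Submodule.smul_mem _ _ hz0mem
    exact (Submodule.mem_orthogonal K _).mp hz1 y (Submodule.subset_span (by simp))

private lemma aux_sum3 (f : Fin 3 → ℝ) {i1 i2 i3 : Fin 3} (h12 : i1 ≠ i2) (h13 : i1 ≠ i3)
    (h23 : i2 ≠ i3) : ∑ i, f i = f i1 + f i2 + f i3 := by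
  classical
  have huniv : (Finset.univ : Finset (Fin 3)) = {i1, i2, i3} := by
    symm
    apply Finset.eq_univ_of_card
    rw [Finset.card_insert_of_notMem (by simp [h12, h13]),
      Finset.card_insert_of_notMem (by simp [h23]), Finset.card_singleton]
    simp
  rw [huniv, Finset.sum_insert (by simp [h12, h13]), Finset.sum_insert (by simp [h23]),
    Finset.sum_singleton]
  ring

private lemma aux_onb_pair (b1 b2 : EuclideanSpace ℝ (Fin 3)) (hb1 : ‖b1‖ = 1) (hb2 : ‖b2‖ = 1)
    (h12 : rip b1 b2 = 0) :
    LinearIndependent ℝ ![b1, b2] ∧ IsDualPair b1 b2 b1 b2 := by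
  have i11 : (inner ℝ b1 b1 : ℝ) = 1 := by rw [real_inner_self_eq_norm_sq, hb1]; norm_num
  have i22 : (inner ℝ b2 b2 : ℝ) = 1 := by rw [real_inner_self_eq_norm_sq, hb2]; norm_num
  have i12 : (inner ℝ b1 b2 : ℝ) = 0 := h12
  have i21 : (inner ℝ b2 b1 : ℝ) = 0 := by rw [real_inner_comm]; exact h12
  constructor
  · have ho : Orthonormal ℝ ![b1, b2] := by
      rw [orthonormal_iff_ite]
      intro i j
      fin_cases i <;> fin_cases j <;>
        simp [i11, i22, i12, i21, hb1, hb2]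
    exact ho.linearIndependent
  · refine ⟨Submodule.subset_span (by simp), Submodule.subset_span (by simp), ?_, ?_, ?_, ?_⟩
    · exact i11
    · exact i12
    · exact i21
    · exact i22


private lemma aux_matVec_zero (T : Matrix (Fin 3) (Fin 3) ℝ) :
    matVec T (0 : EuclideanSpace ℝ (Fin 3)) = 0 := by
  apply PiLp.ext; intro i
  simp [matVec, Matrix.mulVec_zero]

private lemma aux_matVec_finsum (T : Matrix (Fin 3) (Fin 3) ℝ) {ι : Type*} (s : Finset ι)
    (f : ι → EuclideanSpace ℝ (Fin 3)) :
    matVec T (∑ i ∈ s, f i) = ∑ i ∈ s, matVec T (f i) := by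
  classical
  induction s using Finset.cons_induction with
  | empty => simpa using aux_matVec_zero T
  | cons a s ha ih => rw [Finset.sum_cons, aux_matVec_add, ih, Finset.sum_cons]


private lemma aux_attain (T : Matrix (Fin 3) (Fin 3) ℝ) (l1 l2 : ℝ)
    (hl1 : 0 ≤ l1) (hl2 : 0 ≤ l2) (hpos : 0 < l1 + l2)
    (u v b1 b2 : EuclideanSpace ℝ (Fin 3))
    (hu : ‖u‖ = 1) (hv : ‖v‖ = 1) (huv : rip u v = 0)
    (hb1 : ‖b1‖ = 1) (hb2 : ‖b2‖ = 1)
    (hgu1 : rip (matVec Tᵀ u) b1 = Real.sqrt l1)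
    (hgu2 : rip (matVec Tᵀ u) b2 = 0)
    (hgv1 : rip (matVec Tᵀ v) b1 = 0)
    (hgv2 : rip (matVec Tᵀ v) b2 = Real.sqrt l2) :
    ∃ a1 a2 : EuclideanSpace ℝ (Fin 3), ‖a1‖ = 1 ∧ ‖a2‖ = 1 ∧
      ‖(rip (matVec Tᵀ a1) b1 + rip (matVec Tᵀ a2) b1) • b1 +
        (rip (matVec Tᵀ a1) b2 + rip (matVec Tᵀ a2) b2) • b2‖ +
      ‖(rip (matVec Tᵀ a1) b1 - rip (matVec Tᵀ a2) b1) • b1 +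
        (rip (matVec Tᵀ a1) b2 - rip (matVec Tᵀ a2) b2) • b2‖
        = 2 * Real.sqrt (l1 + l2) := by
  have hs1sq : Real.sqrt l1 ^ 2 = l1 := Real.sq_sqrt hl1
  have hs2sq : Real.sqrt l2 ^ 2 = l2 := Real.sq_sqrt hl2
  have hssq : Real.sqrt (l1 + l2) ^ 2 = l1 + l2 := Real.sq_sqrt hpos.le
  have hs1nn : 0 ≤ Real.sqrt l1 := Real.sqrt_nonneg l1
  have hs2nn : 0 ≤ Real.sqrt l2 := Real.sqrt_nonneg l2
  have hspos : 0 < Real.sqrt (l1 + l2) := Real.sqrt_pos.mpr hpos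
  set s1 := Real.sqrt l1
  set s2 := Real.sqrt l2
  set s := Real.sqrt (l1 + l2)
  have hiuu : (inner ℝ u u : ℝ) = 1 := by rw [real_inner_self_eq_norm_sq, hu]; norm_num
  have hivv : (inner ℝ v v : ℝ) = 1 := by rw [real_inner_self_eq_norm_sq, hv]; norm_num
  have hiuv : (inner ℝ u v : ℝ) = 0 := huv
  have hivu : (inner ℝ v u : ℝ) = 0 := by rw [real_inner_comm]; exact huv
  have hinner : ∀ r t : ℝ, (inner ℝ (r • u + t • v) (r • u + t • v) : ℝ) = r ^ 2 + t ^ 2 := by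
    intro r t
    simp only [inner_add_left, inner_add_right, real_inner_smul_left, real_inner_smul_right,
      hiuu, hivv, hiuv, hivu]
    ring
  set p := s1 / s with hpdef
  set q := s2 / s with hqdef
  have hpnn : 0 ≤ p := div_nonneg hs1nn hspos.le
  have hqnn : 0 ≤ q := div_nonneg hs2nn hspos.le
  have hpq : p ^ 2 + q ^ 2 = 1 := by
    rw [hpdef, hqdef, div_pow, div_pow, ← add_div, hs1sq, hs2sq, hssq]
    field_simp
  refine ⟨p • u + q • v, p • u - q • v, ?_, ?_, ?_⟩
  · have h2 : ‖p • u + q • v‖ ^ 2 = 1 := by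
      rw [← real_inner_self_eq_norm_sq, hinner p q, hpq]
    rw [← Real.sqrt_sq (norm_nonneg _), h2, Real.sqrt_one]
  · have h2 : ‖p • u - q • v‖ ^ 2 = 1 := by
      rw [sub_eq_add_neg, ← neg_smul, ← real_inner_self_eq_norm_sq, hinner p (-q)]
      rw [show (-q) ^ 2 = q ^ 2 by ring, hpq]
    rw [← Real.sqrt_sq (norm_nonneg _), h2, Real.sqrt_one]
  · have hga1 : matVec Tᵀ (p • u + q • v) = p • matVec Tᵀ u + q • matVec Tᵀ v := by
      rw [aux_matVec_add, aux_matVec_smul, aux_matVec_smul]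
    have hga2 : matVec Tᵀ (p • u - q • v) = p • matVec Tᵀ u - q • matVec Tᵀ v := by
      rw [aux_matVec_sub, aux_matVec_smul, aux_matVec_smul]
    have E11 : rip (matVec Tᵀ (p • u + q • v)) b1 = p * s1 := by
      rw [hga1]
      simp only [rip, inner_add_left, real_inner_smul_left]
      rw [show (inner ℝ (matVec Tᵀ u) b1 : ℝ) = s1 from hgu1,
        show (inner ℝ (matVec Tᵀ v) b1 : ℝ) = 0 from hgv1]
      ring
    have E21 : rip (matVec Tᵀ (p • u - q • v)) b1 = p * s1 := by
      rw [hga2]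
      simp only [rip, inner_sub_left, real_inner_smul_left]
      rw [show (inner ℝ (matVec Tᵀ u) b1 : ℝ) = s1 from hgu1,
        show (inner ℝ (matVec Tᵀ v) b1 : ℝ) = 0 from hgv1]
      ring
    have E12 : rip (matVec Tᵀ (p • u + q • v)) b2 = q * s2 := by
      rw [hga1]
      simp only [rip, inner_add_left, real_inner_smul_left]
      rw [show (inner ℝ (matVec Tᵀ u) b2 : ℝ) = 0 from hgu2,
        show (inner ℝ (matVec Tᵀ v) b2 : ℝ) = s2 from hgv2]
      ring
    have E22 : rip (matVec Tᵀ (p • u - q • v)) b2 = -(q * s2) := by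
      rw [hga2]
      simp only [rip, inner_sub_left, real_inner_smul_left]
      rw [show (inner ℝ (matVec Tᵀ u) b2 : ℝ) = 0 from hgu2,
        show (inner ℝ (matVec Tᵀ v) b2 : ℝ) = s2 from hgv2]
      ring
    rw [E11, E21, E12, E22]
    rw [show p * s1 + p * s1 = 2 * (p * s1) by ring, show q * s2 + -(q * s2) = (0:ℝ) by ring,
      show p * s1 - p * s1 = (0:ℝ) by ring, show q * s2 - -(q * s2) = 2 * (q * s2) by ring]
    rw [zero_smul, add_zero, zero_smul, zero_add]
    rw [norm_smul, norm_smul, hb1, hb2, mul_one, mul_one, Real.norm_eq_abs, Real.norm_eq_abs,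
      abs_of_nonneg (by have := mul_nonneg hpnn hs1nn; linarith : (0:ℝ) ≤ 2 * (p * s1)),
      abs_of_nonneg (by have := mul_nonneg hqnn hs2nn; linarith : (0:ℝ) ≤ 2 * (q * s2))]
    have hps1 : p * s1 = l1 / s := by rw [hpdef, ← hs1sq]; ring
    have hqs2 : q * s2 = l2 / s := by rw [hqdef, ← hs2sq]; ring
    rw [hps1, hqs2]
    have hfin : l1 / s + l2 / s = s := by
      rw [← add_div, ← hssq, pow_two, mul_div_assoc, div_self hspos.ne', mul_one]
    linarith

private theorem aux_main (T : Matrix (Fin 3) (Fin 3) ℝ) (l1 l2 l3 : ℝ)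
    (h12 : l2 ≤ l1) (h23 : l3 ≤ l2)
    (hchar : (T * Tᵀ).charpoly = (X - C l1) * (X - C l2) * (X - C l3)) :
    (∀ a1 a2 b1 b2 b1' b2' : EuclideanSpace ℝ (Fin 3),
      ‖a1‖ = 1 → ‖a2‖ = 1 → IsDualPair b1 b2 b1' b2' →
      ‖(rip (matVec Tᵀ a1) b1 + rip (matVec Tᵀ a2) b1) • b1' +
        (rip (matVec Tᵀ a1) b2 + rip (matVec Tᵀ a2) b2) • b2'‖ +
      ‖(rip (matVec Tᵀ a1) b1 - rip (matVec Tᵀ a2) b1) • b1' +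
        (rip (matVec Tᵀ a1) b2 - rip (matVec Tᵀ a2) b2) • b2'‖
        ≤ 2 * Real.sqrt (l1 + l2)) ∧
    (∃ a1 a2 b1 b2 : EuclideanSpace ℝ (Fin 3),
      ‖a1‖ = 1 ∧ ‖a2‖ = 1 ∧ ‖b1‖ = 1 ∧ ‖b2‖ = 1 ∧ rip b1 b2 = 0 ∧
      ‖(rip (matVec Tᵀ a1) b1 + rip (matVec Tᵀ a2) b1) • b1 +
        (rip (matVec Tᵀ a1) b2 + rip (matVec Tᵀ a2) b2) • b2‖ +
      ‖(rip (matVec Tᵀ a1) b1 - rip (matVec Tᵀ a2) b1) • b1 +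
        (rip (matVec Tᵀ a1) b2 - rip (matVec Tᵀ a2) b2) • b2‖
        = 2 * Real.sqrt (l1 + l2)) := by
  classical
  have hM : (T * Tᵀ).IsHermitian := by
    have h := Matrix.isHermitian_mul_conjTranspose_self T
    rwa [Matrix.conjTranspose_eq_transpose_of_trivial] at h
  set M : Matrix (Fin 3) (Fin 3) ℝ := T * Tᵀ with hMdef
  set μ : Fin 3 → ℝ := hM.eigenvalues with hμdef
  set B := hM.eigenvectorBasis with hBdef
  have hBn : ∀ i, ‖B i‖ = 1 := fun i => hM.eigenvectorBasis.orthonormal.1 i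
  have hBo : ∀ i j, i ≠ j → rip (B i) (B j) = 0 := fun i j hij =>
    hM.eigenvectorBasis.orthonormal.2 hij
  have hF1 : ∀ i, matVec M (B i) = μ i • B i := by
    intro i
    apply PiLp.ext; intro j
    exact congrFun (hM.mulVec_eigenvectorBasis i) j
  have hripBB : ∀ i, rip (B i) (B i) = 1 := by
    intro i
    show (inner ℝ (B i) (B i) : ℝ) = 1
    rw [real_inner_self_eq_norm_sq, hBn i]; norm_num
  have hrep : ∀ x : EuclideanSpace ℝ (Fin 3), (∑ i, rip (B i) x • B i) = x := by
    intro x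
    conv_rhs => rw [← B.sum_repr x]
    refine Finset.sum_congr rfl fun i _ => ?_
    congr 1
    exact (B.repr_apply_apply x i).symm
  have hquad : ∀ x : EuclideanSpace ℝ (Fin 3),
      rip x (matVec M x) = ∑ i, μ i * rip (B i) x ^ 2 := by
    intro x
    have hMx : matVec M x = ∑ i, (rip (B i) x * μ i) • B i := by
      conv_lhs => rw [← hrep x]
      rw [aux_matVec_finsum]
      refine Finset.sum_congr rfl fun i _ => ?_
      rw [aux_matVec_smul, hF1 i, smul_smul]
    rw [hMx]
    rw [show rip x (∑ i, (rip (B i) x * μ i) • B i)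
        = ∑ i, rip x ((rip (B i) x * μ i) • B i) from by
      simp only [rip]; exact inner_sum _ _ _]
    refine Finset.sum_congr rfl fun i _ => ?_
    rw [show rip x ((rip (B i) x * μ i) • B i) = (rip (B i) x * μ i) * rip x (B i) from
      real_inner_smul_right _ _ _]
    rw [aux_rip_comm x (B i)]
    ring
  have hpars : ∀ x : EuclideanSpace ℝ (Fin 3), (∑ i, rip (B i) x ^ 2) = ‖x‖ ^ 2 := by
    intro x
    have h := B.sum_inner_mul_inner x x
    have hx : (inner ℝ x x : ℝ) = ‖x‖ ^ 2 := real_inner_self_eq_norm_sq x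
    rw [hx] at h
    rw [← h]
    refine Finset.sum_congr rfl fun i _ => ?_
    rw [pow_two]
    congr 1
    exact aux_rip_comm (B i) x
  have hgg : ∀ x y : EuclideanSpace ℝ (Fin 3),
      rip (matVec Tᵀ x) (matVec Tᵀ y) = rip x (matVec M y) := fun x y =>
    aux_rip_matVec_matVec T x y
  have hripBMB : ∀ i, rip (B i) (matVec M (B i)) = μ i := by
    intro i
    rw [hF1 i]
    rw [show rip (B i) (μ i • B i) = μ i * rip (B i) (B i) from real_inner_smul_right _ _ _]
    rw [hripBB i]; ring
  have hμnn : ∀ i, 0 ≤ μ i := by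
    intro i
    rw [← hripBMB i, ← hgg]
    exact real_inner_self_nonneg
  have hMchar : M.charpoly = ∏ i, (X - C (μ i)) := aux_charpoly_hermitian hM
  have hms : Multiset.map μ Finset.univ.val = ({l1, l2, l3} : Multiset ℝ) := by
    have h1 : (Multiset.map (fun a => X - C a) (Multiset.map μ Finset.univ.val)).prod
        = M.charpoly := by
      rw [hMchar, Multiset.map_map]
      rfl
    have h2 : (Multiset.map (fun a => X - C a) ({l1, l2, l3} : Multiset ℝ)).prod
        = M.charpoly := by
      rw [hchar]
      simp only [Multiset.insert_eq_cons, Multiset.map_cons, Multiset.prod_cons,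
        Multiset.map_singleton, Multiset.prod_singleton]
      ring
    have h3 := congrArg Polynomial.roots (h1.trans h2.symm)
    rwa [Polynomial.roots_multiset_prod_X_sub_C, Polynomial.roots_multiset_prod_X_sub_C] at h3
  have hmem : ∀ i, μ i = l1 ∨ μ i = l2 ∨ μ i = l3 := by
    intro i
    have h : μ i ∈ Multiset.map μ Finset.univ.val :=
      Multiset.mem_map.mpr ⟨i, by simp, rfl⟩
    rw [hms] at h
    simpa using h
  have hl3nn : 0 ≤ l3 := by
    have h : l3 ∈ Multiset.map μ Finset.univ.val := by rw [hms]; simp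
    obtain ⟨i, _, hi⟩ := Multiset.mem_map.mp h
    rw [← hi]; exact hμnn i
  have hl2nn : 0 ≤ l2 := le_trans hl3nn h23
  have hl1nn : 0 ≤ l1 := le_trans hl2nn h12
  have hl12nn : (0:ℝ) ≤ l1 + l2 := by linarith
  have hμle : ∀ i, μ i ≤ l1 := fun i => by rcases hmem i with h|h|h <;> rw [h] <;> linarith
  have hmatch : ∃ i1 i2 i3 : Fin 3, i1 ≠ i2 ∧ i1 ≠ i3 ∧ i2 ≠ i3 ∧
      μ i1 = l1 ∧ μ i2 = l2 ∧ μ i3 = l3 := by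
    have h1 : l1 ∈ Multiset.map μ (Finset.univ : Finset (Fin 3)).val := by rw [hms]; simp
    obtain ⟨i1, hi1mem, hi1⟩ := Multiset.mem_map.mp h1
    have e1 : Multiset.map μ ((Finset.univ : Finset (Fin 3)).erase i1).val
        = ({l2, l3} : Multiset ℝ) := by
      have hc : μ i1 ::ₘ Multiset.map μ ((Finset.univ : Finset (Fin 3)).erase i1).val
          = ({l1, l2, l3} : Multiset ℝ) := by
        rw [← Multiset.map_cons, Finset.erase_val, Multiset.cons_erase hi1mem, hms]
      rw [hi1] at hc
      exact (Multiset.cons_inj_right l1).mp hc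
    have h2 : l2 ∈ Multiset.map μ ((Finset.univ : Finset (Fin 3)).erase i1).val := by
      rw [e1]; simp
    obtain ⟨i2, hi2mem, hi2⟩ := Multiset.mem_map.mp h2
    have hi2ne : i2 ≠ i1 := (Finset.mem_erase.mp (Finset.mem_val.mp hi2mem)).1
    have e2 : Multiset.map μ (((Finset.univ : Finset (Fin 3)).erase i1).erase i2).val
        = ({l3} : Multiset ℝ) := by
      have hc : μ i2 ::ₘ Multiset.map μ (((Finset.univ : Finset (Fin 3)).erase i1).erase i2).val
          = ({l2, l3} : Multiset ℝ) := by
        rw [← Multiset.map_cons, Finset.erase_val, Multiset.cons_erase hi2mem, e1]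
      rw [hi2] at hc
      exact (Multiset.cons_inj_right l2).mp hc
    have h3 : l3 ∈ Multiset.map μ (((Finset.univ : Finset (Fin 3)).erase i1).erase i2).val := by
      rw [e2]; simp
    obtain ⟨i3, hi3mem, hi3⟩ := Multiset.mem_map.mp h3
    have hi3ne2 : i3 ≠ i2 := (Finset.mem_erase.mp (Finset.mem_val.mp hi3mem)).1
    have hi3ne1 : i3 ≠ i1 := (Finset.mem_erase.mp (Finset.mem_erase.mp (Finset.mem_val.mp hi3mem)).2).1
    exact ⟨i1, i2, i3, hi2ne.symm, hi3ne1.symm, hi3ne2.symm, hi1, hi2, hi3⟩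
  have hsingle : ∀ x : EuclideanSpace ℝ (Fin 3), rip x (matVec M x) ≤ l1 * ‖x‖ ^ 2 := by
    intro x
    rw [hquad x]
    calc (∑ i, μ i * rip (B i) x ^ 2) ≤ ∑ i, l1 * rip (B i) x ^ 2 :=
          Finset.sum_le_sum fun i _ => mul_le_mul_of_nonneg_right (hμle i) (sq_nonneg _)
      _ = l1 * ‖x‖ ^ 2 := by rw [← Finset.mul_sum, hpars x]
  have hkyfan : ∀ x y : EuclideanSpace ℝ (Fin 3), ‖x‖ = 1 → ‖y‖ = 1 → rip x y = 0 →
      rip x (matVec M x) + rip y (matVec M y) ≤ l1 + l2 := by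
    intro x y hx hy hxy
    obtain ⟨i1, i2, i3, h12', h13', h23', e1, e2, e3⟩ := hmatch
    set c : Fin 3 → ℝ := fun i => rip (B i) x ^ 2 + rip (B i) y ^ 2 with hc
    have hcle : ∀ i, c i ≤ 1 := by
      intro i
      have hb := aux_bessel2 x y (B i) hx hy hxy
      rw [hBn i] at hb
      simp only [hc]
      rw [aux_rip_comm (B i) x, aux_rip_comm (B i) y]
      simpa using hb
    have hcnn : ∀ i, 0 ≤ c i := fun i => by positivity
    have hcsum : c i1 + c i2 + c i3 = 2 := by
      rw [← aux_sum3 c h12' h13' h23']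
      simp only [hc]
      rw [Finset.sum_add_distrib, hpars x, hpars y, hx, hy]; norm_num
    have hsum : rip x (matVec M x) + rip y (matVec M y) = ∑ i, μ i * c i := by
      rw [hquad x, hquad y, ← Finset.sum_add_distrib]
      exact Finset.sum_congr rfl fun i _ => by simp only [hc]; ring
    rw [hsum, aux_sum3 (fun i => μ i * c i) h12' h13' h23']
    simp only [e1, e2, e3]
    nlinarith [mul_nonneg (sub_nonneg.mpr (le_trans h23 h12)) (sub_nonneg.mpr (hcle i1)),
      mul_nonneg (sub_nonneg.mpr h23) (sub_nonneg.mpr (hcle i2)), hcnn i3, hcnn i1, hcnn i2]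
  have hgn : ∀ x : EuclideanSpace ℝ (Fin 3), ‖matVec Tᵀ x‖ ^ 2 = rip x (matVec M x) := by
    intro x
    rw [← hgg x x]
    exact (real_inner_self_eq_norm_sq _).symm
  constructor
  · -- upper bound
    intro a1 a2 b1 b2 b1' b2' ha1 ha2 hdual
    have hEadd : ∀ b, rip (matVec Tᵀ a1) b + rip (matVec Tᵀ a2) b
        = rip (matVec Tᵀ (a1 + a2)) b := by
      intro b
      rw [aux_matVec_add]
      exact (inner_add_left _ _ _).symm
    have hEsub : ∀ b, rip (matVec Tᵀ a1) b - rip (matVec Tᵀ a2) b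
        = rip (matVec Tᵀ (a1 - a2)) b := by
      intro b
      rw [aux_matVec_sub]
      exact (inner_sub_left _ _ _).symm
    rw [hEadd b1, hEadd b2, hEsub b1, hEsub b2]
    have hd1 := aux_dual_bound b1 b2 b1' b2' (matVec Tᵀ (a1 + a2)) hdual
    have hd2 := aux_dual_bound b1 b2 b1' b2' (matVec Tᵀ (a1 - a2)) hdual
    have ia11 : (inner ℝ a1 a1 : ℝ) = 1 := by rw [real_inner_self_eq_norm_sq, ha1]; norm_num
    have ia22 : (inner ℝ a2 a2 : ℝ) = 1 := by rw [real_inner_self_eq_norm_sq, ha2]; norm_num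
    have horth : rip (a1 + a2) (a1 - a2) = 0 := by
      simp only [rip, inner_add_left, inner_sub_right, ia11, ia22,
        real_inner_comm a2 a1]
      ring
    have hnorm4 : ‖a1 + a2‖ ^ 2 + ‖a1 - a2‖ ^ 2 = 4 := by
      rw [← real_inner_self_eq_norm_sq, ← real_inner_self_eq_norm_sq]
      simp only [inner_add_left, inner_add_right, inner_sub_left, inner_sub_right, ia11, ia22,
        real_inner_comm a2 a1]
      ring
    have key : ∀ cc dd : EuclideanSpace ℝ (Fin 3), rip cc dd = 0 → ‖cc‖ ^ 2 + ‖dd‖ ^ 2 = 4 →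
        ‖matVec Tᵀ cc‖ + ‖matVec Tᵀ dd‖ ≤ 2 * Real.sqrt (l1 + l2) := by
      intro cc dd hcd hsq
      have hone : ∀ z : EuclideanSpace ℝ (Fin 3), ‖z‖ ^ 2 = 4 →
          ‖matVec Tᵀ z‖ ≤ 2 * Real.sqrt (l1 + l2) := by
        intro z hz
        have h1 : ‖matVec Tᵀ z‖ ^ 2 ≤ 4 * (l1 + l2) := by
          rw [hgn z]
          calc rip z (matVec M z) ≤ l1 * ‖z‖ ^ 2 := hsingle z
            _ = 4 * l1 := by rw [hz]; ring
            _ ≤ 4 * (l1 + l2) := by linarith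
        have h2 := Real.sqrt_le_sqrt h1
        rw [Real.sqrt_sq (norm_nonneg _)] at h2
        calc ‖matVec Tᵀ z‖ ≤ Real.sqrt (4 * (l1 + l2)) := h2
          _ = 2 * Real.sqrt (l1 + l2) := by
            rw [show (4:ℝ) * (l1 + l2) = 2 ^ 2 * (l1 + l2) by ring,
              Real.sqrt_mul (by positivity), Real.sqrt_sq (by norm_num)]
      by_cases hc0 : cc = 0
      · rw [hc0, aux_matVec_zero, norm_zero, zero_add]
        apply hone
        rw [hc0] at hsq; simpa using hsq
      by_cases hd0 : dd = 0
      · rw [hd0, aux_matVec_zero, norm_zero, add_zero]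
        apply hone
        rw [hd0] at hsq; simpa using hsq
      · have hcn : ‖cc‖ ≠ 0 := norm_ne_zero_iff.mpr hc0
        have hdn : ‖dd‖ ≠ 0 := norm_ne_zero_iff.mpr hd0
        set x : EuclideanSpace ℝ (Fin 3) := ‖cc‖⁻¹ • cc with hxdef
        set y : EuclideanSpace ℝ (Fin 3) := ‖dd‖⁻¹ • dd with hydef
        have hx : ‖x‖ = 1 := by
          rw [hxdef, norm_smul, Real.norm_eq_abs, abs_inv, abs_norm]
          field_simp
        have hy : ‖y‖ = 1 := by
          rw [hydef, norm_smul, Real.norm_eq_abs, abs_inv, abs_norm]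
          field_simp
        have hxy : rip x y = 0 := by
          simp only [hxdef, hydef, rip, real_inner_smul_left, real_inner_smul_right]
          rw [show (inner ℝ cc dd : ℝ) = 0 from hcd]
          ring
        have hgx : ‖matVec Tᵀ cc‖ = ‖cc‖ * ‖matVec Tᵀ x‖ := by
          rw [hxdef, aux_matVec_smul, norm_smul, Real.norm_eq_abs, abs_inv, abs_norm]
          field_simp
        have hgy : ‖matVec Tᵀ dd‖ = ‖dd‖ * ‖matVec Tᵀ y‖ := by
          rw [hydef, aux_matVec_smul, norm_smul, Real.norm_eq_abs, abs_inv, abs_norm]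
          field_simp
        have hsum2 : ‖matVec Tᵀ x‖ ^ 2 + ‖matVec Tᵀ y‖ ^ 2 ≤ l1 + l2 := by
          rw [hgn x, hgn y]
          exact hkyfan x y hx hy hxy
        calc ‖matVec Tᵀ cc‖ + ‖matVec Tᵀ dd‖
            = ‖cc‖ * ‖matVec Tᵀ x‖ + ‖dd‖ * ‖matVec Tᵀ y‖ := by rw [hgx, hgy]
          _ ≤ Real.sqrt (‖cc‖ ^ 2 + ‖dd‖ ^ 2) * Real.sqrt (‖matVec Tᵀ x‖ ^ 2 + ‖matVec Tᵀ y‖ ^ 2) :=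
              aux_cs2 _ _ _ _ (norm_nonneg _) (norm_nonneg _) (norm_nonneg _) (norm_nonneg _)
          _ = 2 * Real.sqrt (‖matVec Tᵀ x‖ ^ 2 + ‖matVec Tᵀ y‖ ^ 2) := by
              rw [hsq, show (4:ℝ) = 2 ^ 2 by norm_num, Real.sqrt_sq (by norm_num)]
          _ ≤ 2 * Real.sqrt (l1 + l2) := by
              have := Real.sqrt_le_sqrt hsum2
              linarith
    calc ‖rip (matVec Tᵀ (a1 + a2)) b1 • b1' + rip (matVec Tᵀ (a1 + a2)) b2 • b2'‖ +
          ‖rip (matVec Tᵀ (a1 - a2)) b1 • b1' + rip (matVec Tᵀ (a1 - a2)) b2 • b2'‖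
        ≤ ‖matVec Tᵀ (a1 + a2)‖ + ‖matVec Tᵀ (a1 - a2)‖ := add_le_add hd1 hd2
      _ ≤ 2 * Real.sqrt (l1 + l2) := key _ _ horth hnorm4
  · -- attainment
    by_cases hl1pos : 0 < l1
    · obtain ⟨i1, i2, i3, h12', h13', h23', e1, e2, e3⟩ := hmatch
      have hguu : rip (matVec Tᵀ (B i1)) (matVec Tᵀ (B i1)) = l1 := by
        rw [hgg, hF1 i1, show rip (B i1) (μ i1 • B i1) = μ i1 * rip (B i1) (B i1) from
          real_inner_smul_right _ _ _, hripBB i1, e1, mul_one]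
      have hguv : rip (matVec Tᵀ (B i1)) (matVec Tᵀ (B i2)) = 0 := by
        rw [hgg, hF1 i2, show rip (B i1) (μ i2 • B i2) = μ i2 * rip (B i1) (B i2) from
          real_inner_smul_right _ _ _, hBo i1 i2 h12', mul_zero]
      have hgvu : rip (matVec Tᵀ (B i2)) (matVec Tᵀ (B i1)) = 0 := by
        rw [aux_rip_comm]; exact hguv
      have hgvv : rip (matVec Tᵀ (B i2)) (matVec Tᵀ (B i2)) = l2 := by
        rw [hgg, hF1 i2, show rip (B i2) (μ i2 • B i2) = μ i2 * rip (B i2) (B i2) from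
          real_inner_smul_right _ _ _, hripBB i2, e2, mul_one]
      have hs1sq : Real.sqrt l1 ^ 2 = l1 := Real.sq_sqrt hl1nn
      have hs1pos : 0 < Real.sqrt l1 := Real.sqrt_pos.mpr hl1pos
      have hs1ne : Real.sqrt l1 ≠ 0 := ne_of_gt hs1pos
      have hgunorm : ‖matVec Tᵀ (B i1)‖ = Real.sqrt l1 := by
        have h2 : ‖matVec Tᵀ (B i1)‖ ^ 2 = l1 := by
          rw [← real_inner_self_eq_norm_sq]; exact hguu
        rw [← Real.sqrt_sq (norm_nonneg _), h2]
      have hb1norm : ‖(Real.sqrt l1)⁻¹ • matVec Tᵀ (B i1)‖ = 1 := by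
        rw [norm_smul, Real.norm_eq_abs, abs_inv, abs_of_nonneg hs1pos.le, hgunorm]
        field_simp
      have hgu1 : rip (matVec Tᵀ (B i1)) ((Real.sqrt l1)⁻¹ • matVec Tᵀ (B i1)) = Real.sqrt l1 := by
        rw [show rip (matVec Tᵀ (B i1)) ((Real.sqrt l1)⁻¹ • matVec Tᵀ (B i1))
            = (Real.sqrt l1)⁻¹ * rip (matVec Tᵀ (B i1)) (matVec Tᵀ (B i1)) from
          real_inner_smul_right _ _ _, hguu, ← hs1sq]
        field_simp
        rw [Real.sqrt_sq hs1pos.le]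
      have hgv1 : rip (matVec Tᵀ (B i2)) ((Real.sqrt l1)⁻¹ • matVec Tᵀ (B i1)) = 0 := by
        rw [show rip (matVec Tᵀ (B i2)) ((Real.sqrt l1)⁻¹ • matVec Tᵀ (B i1))
            = (Real.sqrt l1)⁻¹ * rip (matVec Tᵀ (B i2)) (matVec Tᵀ (B i1)) from
          real_inner_smul_right _ _ _, hgvu, mul_zero]
      have hb2ex : ∃ b2, ‖b2‖ = 1 ∧ rip ((Real.sqrt l1)⁻¹ • matVec Tᵀ (B i1)) b2 = 0 ∧
          rip (matVec Tᵀ (B i2)) b2 = Real.sqrt l2 := by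
        by_cases hl2pos : 0 < l2
        · have hs2sq : Real.sqrt l2 ^ 2 = l2 := Real.sq_sqrt hl2nn
          have hs2pos : 0 < Real.sqrt l2 := Real.sqrt_pos.mpr hl2pos
          have hgvnorm : ‖matVec Tᵀ (B i2)‖ = Real.sqrt l2 := by
            have h2 : ‖matVec Tᵀ (B i2)‖ ^ 2 = l2 := by
              rw [← real_inner_self_eq_norm_sq]; exact hgvv
            rw [← Real.sqrt_sq (norm_nonneg _), h2]
          refine ⟨(Real.sqrt l2)⁻¹ • matVec Tᵀ (B i2), ?_, ?_, ?_⟩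
          · rw [norm_smul, Real.norm_eq_abs, abs_inv, abs_of_nonneg hs2pos.le, hgvnorm]
            field_simp
          · rw [show rip ((Real.sqrt l1)⁻¹ • matVec Tᵀ (B i1))
                ((Real.sqrt l2)⁻¹ • matVec Tᵀ (B i2)) = (Real.sqrt l1)⁻¹ *
                  ((Real.sqrt l2)⁻¹ * rip (matVec Tᵀ (B i1)) (matVec Tᵀ (B i2))) from by
              simp only [rip, real_inner_smul_left, real_inner_smul_right]; ring, hguv]
            ring
          · rw [show rip (matVec Tᵀ (B i2)) ((Real.sqrt l2)⁻¹ • matVec Tᵀ (B i2))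
                = (Real.sqrt l2)⁻¹ * rip (matVec Tᵀ (B i2)) (matVec Tᵀ (B i2)) from
              real_inner_smul_right _ _ _, hgvv, ← hs2sq]
            field_simp
            rw [Real.sqrt_sq hs2pos.le]
        · have hl2z : l2 = 0 := le_antisymm (not_lt.mp hl2pos) hl2nn
          have hgvz : matVec Tᵀ (B i2) = 0 := by
            have h0 : rip (matVec Tᵀ (B i2)) (matVec Tᵀ (B i2)) = 0 := by rw [hgvv, hl2z]
            exact inner_self_eq_zero.mp h0
          obtain ⟨z, hz1, hz2, _⟩ := aux_exists_unit_orth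
            ((Real.sqrt l1)⁻¹ • matVec Tᵀ (B i1)) ((Real.sqrt l1)⁻¹ • matVec Tᵀ (B i1))
          refine ⟨z, hz1, hz2, ?_⟩
          rw [hgvz, hl2z, Real.sqrt_zero]
          exact inner_zero_left z
      obtain ⟨b2, hb2n, hb12, hgv2⟩ := hb2ex
      have hgu2 : rip (matVec Tᵀ (B i1)) b2 = 0 := by
        have hgueq : matVec Tᵀ (B i1) = Real.sqrt l1 • ((Real.sqrt l1)⁻¹ • matVec Tᵀ (B i1)) := by
          rw [smul_inv_smul₀ hs1ne]
        rw [hgueq, show rip (Real.sqrt l1 • ((Real.sqrt l1)⁻¹ • matVec Tᵀ (B i1))) b2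
            = Real.sqrt l1 * rip ((Real.sqrt l1)⁻¹ • matVec Tᵀ (B i1)) b2 from
          real_inner_smul_left _ _ _, hb12, mul_zero]
      obtain ⟨a1, a2, ha1, ha2, hval⟩ := aux_attain T l1 l2 hl1nn hl2nn (by linarith)
        (B i1) (B i2) ((Real.sqrt l1)⁻¹ • matVec Tᵀ (B i1)) b2 (hBn i1) (hBn i2)
        (hBo i1 i2 h12') hb1norm hb2n hgu1 hgu2 hgv1 hgv2
      exact ⟨a1, a2, (Real.sqrt l1)⁻¹ • matVec Tᵀ (B i1), b2, ha1, ha2, hb1norm, hb2n,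
        hb12, hval⟩
    · have hl1z : l1 = 0 := le_antisymm (not_lt.mp hl1pos) hl1nn
      have hl2z : l2 = 0 := le_antisymm (by linarith) hl2nn
      have hTz : ∀ x : EuclideanSpace ℝ (Fin 3), matVec Tᵀ x = 0 := by
        intro x
        have h1 := hgg x x
        have h2 := hsingle x
        rw [hl1z, zero_mul] at h2
        have h3 : (0:ℝ) ≤ rip (matVec Tᵀ x) (matVec Tᵀ x) := real_inner_self_nonneg
        have h0 : rip (matVec Tᵀ x) (matVec Tᵀ x) = 0 := by linarith
        exact inner_self_eq_zero.mp h0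
      refine ⟨EuclideanSpace.single 0 1, EuclideanSpace.single 0 1,
        EuclideanSpace.single 0 1, EuclideanSpace.single 1 1, ?_, ?_, ?_, ?_, ?_, ?_⟩
      · rw [EuclideanSpace.norm_single]; norm_num
      · rw [EuclideanSpace.norm_single]; norm_num
      · rw [EuclideanSpace.norm_single]; norm_num
      · rw [EuclideanSpace.norm_single]; norm_num
      · simp [rip, EuclideanSpace.inner_single_left, EuclideanSpace.single_apply]
      · have hz : ∀ b : EuclideanSpace ℝ (Fin 3), rip (0 : EuclideanSpace ℝ (Fin 3)) b = 0 :=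
          fun b => inner_zero_left b
        simp only [hTz, hz]
        rw [hl1z, hl2z]
        simp


end AuxLemmas

/-- `2√(λ1+λ2)` is the greatest analog CHSH value of a two-qubit state `ρ`
over all unit vectors `a1, a2` and linearly independent unit vectors `b1, b2` (with their
dual basis `b1', b2'`); moreover the maximum is attained with `b1, b2` orthonormal. -/
theorem achsh_isGreatest (ρ : Matrix (Fin 2 × Fin 2) (Fin 2 × Fin 2) ℂ)
    (hρ : ρ.PosSemidef) (htr : ρ.trace = 1)
    (l1 l2 l3 : ℝ) (h12 : l2 ≤ l1) (h23 : l3 ≤ l2)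
    (hchar : (corrMatrix ρ * (corrMatrix ρ)ᵀ).charpoly
      = (X - C l1) * (X - C l2) * (X - C l3)) :
    (∀ a1 a2 b1 b2 b1' b2' : EuclideanSpace ℝ (Fin 3),
      ‖a1‖ = 1 → ‖a2‖ = 1 → ‖b1‖ = 1 → ‖b2‖ = 1 →
      LinearIndependent ℝ ![b1, b2] → IsDualPair b1 b2 b1' b2' →
      ACHSHval ρ a1 a2 b1 b2 b1' b2' ≤ 2 * Real.sqrt (l1 + l2)) ∧
    (∃ a1 a2 b1 b2 b1' b2' : EuclideanSpace ℝ (Fin 3),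
      ‖a1‖ = 1 ∧ ‖a2‖ = 1 ∧ ‖b1‖ = 1 ∧ ‖b2‖ = 1 ∧
      LinearIndependent ℝ ![b1, b2] ∧ IsDualPair b1 b2 b1' b2' ∧
      rip b1 b2 = 0 ∧
      ACHSHval ρ a1 a2 b1 b2 b1' b2' = 2 * Real.sqrt (l1 + l2)) := by
  obtain ⟨hub, a1, a2, b1, b2, ha1, ha2, hb1, hb2, hb12, hval⟩ :=
    aux_main (corrMatrix ρ) l1 l2 l3 h12 h23 hchar
  constructor
  · intro c1 c2 d1 d2 d1' d2' hc1 hc2 _ _ _ hdual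
    have h := hub c1 c2 d1 d2 d1' d2' hc1 hc2 hdual
    unfold ACHSHval
    simp only [aux_corrE_eq_rip]
    exact h
  · obtain ⟨hli, hdp⟩ := aux_onb_pair b1 b2 hb1 hb2 hb12
    refine ⟨a1, a2, b1, b2, b1, b2, ha1, ha2, hb1, hb2, hli, hdp, hb12, ?_⟩
    unfold ACHSHval
    simp only [aux_corrE_eq_rip]
    exact hval

end
end

section
/- Let ρ be a two-qubit state with correlation matrix T, and let λ1 ≥ λ2 be the two largest eigenvalues of the real symmetric matrix T * Tᵀ. Then √2·(√λ1 + √λ2) is the greatest element of the set of CHSH values of ρ taken over all quadruples of unit vectors a1, a2, b1, b2 in EuclideanSpace ℝ (Fin 3) satisfying ⟪a1, a2⟫ = 0 and ⟪b1, b2⟫ = 0 (mutually unbiased measurements for both parties): every such CHSH value is at most √2·(√λ1 + √λ2), and some such quadruple attains this value. -/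
open Matrix Polynomial
open scoped Kronecker Matrix ComplexOrder

noncomputable section

set_option maxHeartbeats 1000000
namespace CHSHaux


lemma cs3 (x0 x1 x2 y0 y1 y2 : ℝ) :
    (x0*y0+x1*y1+x2*y2)^2 ≤ (x0^2+x1^2+x2^2)*(y0^2+y1^2+y2^2) := by
  nlinarith [sq_nonneg (x0*y1 - x1*y0), sq_nonneg (x0*y2 - x2*y0), sq_nonneg (x1*y2 - x2*y1)]

lemma col_bound (a0 a1 a2 b0 b1 b2 : ℝ)
    (hA : a0^2+a1^2+a2^2 = 1) (hB : b0^2+b1^2+b2^2 = 1)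
    (hC : a0*b0+a1*b1+a2*b2 = 0) : a0^2 + b0^2 ≤ 1 := by
  have key : a0^2 + b0^2 + (a1*b2 - a2*b1)^2 = 1 := by
    linear_combination ((b0^2+b1^2+b2^2) - b0^2) * hA + (1 - a0^2) * hB
      + (2*a0*b0 - (a0*b0+a1*b1+a2*b2)) * hC
  nlinarith [sq_nonneg (a1*b2 - a2*b1)]

lemma kyfan (l1 l2 l3 a0 a1 a2 b0 b1 b2 : ℝ) (h12 : l2 ≤ l1) (h23 : l3 ≤ l2)
    (hA : a0^2+a1^2+a2^2 = 1) (hB : b0^2+b1^2+b2^2 = 1)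
    (hC : a0*b0+a1*b1+a2*b2 = 0) :
    (l1*a0^2+l2*a1^2+l3*a2^2) + (l1*b0^2+l2*b1^2+l3*b2^2) ≤ l1 + l2 := by
  have t0 : a0^2 + b0^2 ≤ 1 := col_bound a0 a1 a2 b0 b1 b2 hA hB hC
  have t1 : a1^2 + b1^2 ≤ 1 := col_bound a1 a0 a2 b1 b0 b2 (by linarith) (by linarith) (by linarith)
  have key : (l1+l2) - ((l1*a0^2+l2*a1^2+l3*a2^2) + (l1*b0^2+l2*b1^2+l3*b2^2))
      = (l1-l3)*(1-(a0^2+b0^2)) + (l2-l3)*(1-(a1^2+b1^2)) := by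
    linear_combination (-l3)*hA + (-l3)*hB
  nlinarith [mul_nonneg (by linarith : (0:ℝ) ≤ l1 - l3) (by linarith : (0:ℝ) ≤ 1-(a0^2+b0^2)),
    mul_nonneg (by linarith : (0:ℝ) ≤ l2 - l3) (by linarith : (0:ℝ) ≤ 1-(a1^2+b1^2))]

lemma gram (l1 l2 l3 a0 a1 a2 b0 b1 b2 : ℝ) (h12 : l2 ≤ l1) (h23 : l3 ≤ l2)
    (hl1 : 0 ≤ l1) (hl2 : 0 ≤ l2)
    (hA : a0^2+a1^2+a2^2 = 1) (hB : b0^2+b1^2+b2^2 = 1)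
    (hC : a0*b0+a1*b1+a2*b2 = 0) :
    (l1*a0^2+l2*a1^2+l3*a2^2) * (l1*b0^2+l2*b1^2+l3*b2^2)
      - (l1*a0*b0+l2*a1*b1+l3*a2*b2)^2 ≤ l1 * l2 := by
  have hd : (a0*b1-a1*b0)^2 + (a0*b2-a2*b0)^2 + (a1*b2-a2*b1)^2 = 1 := by
    linear_combination (b0^2+b1^2+b2^2) * hA + hB - (a0*b0+a1*b1+a2*b2) * hC
  have key : l1*l2 - ((l1*a0^2+l2*a1^2+l3*a2^2) * (l1*b0^2+l2*b1^2+l3*b2^2)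
      - (l1*a0*b0+l2*a1*b1+l3*a2*b2)^2)
      = l1*(l2-l3)*(a0*b2-a2*b0)^2 + l2*(l1-l3)*(a1*b2-a2*b1)^2 := by
    linear_combination (-(l1*l2))*hd
  nlinarith [mul_nonneg (mul_nonneg hl1 (by linarith : (0:ℝ) ≤ l2-l3)) (sq_nonneg (a0*b2-a2*b0)),
    mul_nonneg (mul_nonneg hl2 (by linarith : (0:ℝ) ≤ l1-l3)) (sq_nonneg (a1*b2-a2*b1))]

lemma freeSide (u0 u1 u2 v0 v1 v2 p0 p1 p2 q0 q1 q2 : ℝ)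
    (hp : p0^2+p1^2+p2^2 = 1) (hq : q0^2+q1^2+q2^2 = 1)
    (hpq : p0*q0+p1*q1+p2*q2 = 0) :
    (p0*u0+p1*u1+p2*u2) + (q0*v0+q1*v1+q2*v2)
      ≤ Real.sqrt ((u0^2+u1^2+u2^2) + (v0^2+v1^2+v2^2)
          + 2*Real.sqrt ((u0^2+u1^2+u2^2)*(v0^2+v1^2+v2^2) - (u0*v0+u1*v1+u2*v2)^2)) := by
  set x := p0*u0+p1*u1+p2*u2 with hx
  set y := q0*v0+q1*v1+q2*v2 with hy
  set w := q0*u0+q1*u1+q2*u2 with hw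
  set z := p0*v0+p1*v1+p2*v2 with hz
  set UU := u0^2+u1^2+u2^2 with hUU
  set VV := v0^2+v1^2+v2^2 with hVV
  set G := UU*VV - (u0*v0+u1*v1+u2*v2)^2 with hG
  have hGsq : G = (u0*v1-u1*v0)^2 + (u0*v2-u2*v0)^2 + (u1*v2-u2*v1)^2 := by
    rw [hG, hUU, hVV]; ring
  have hGnn : 0 ≤ G := by rw [hGsq]; positivity
  -- Binet–Cauchy + Cauchy–Schwarz on cross products
  have hbc : (x*y - w*z)^2 ≤ G := by
    have i1 : x*y - w*z = (u1*v2-u2*v1)*(p1*q2-p2*q1) + (u2*v0-u0*v2)*(p2*q0-p0*q2)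
        + (u0*v1-u1*v0)*(p0*q1-p1*q0) := by rw [hx, hy, hw, hz]; ring
    have i2 := cs3 (u1*v2-u2*v1) (u2*v0-u0*v2) (u0*v1-u1*v0)
      (p1*q2-p2*q1) (p2*q0-p0*q2) (p0*q1-p1*q0)
    have i3 : (p1*q2-p2*q1)^2 + (p2*q0-p0*q2)^2 + (p0*q1-p1*q0)^2 = 1 := by
      linear_combination (q0^2+q1^2+q2^2) * hp + hq - (p0*q0+p1*q1+p2*q2) * hpq
    calc (x*y - w*z)^2 = ((u1*v2-u2*v1)*(p1*q2-p2*q1) + (u2*v0-u0*v2)*(p2*q0-p0*q2)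
        + (u0*v1-u1*v0)*(p0*q1-p1*q0))^2 := by rw [i1]
      _ ≤ ((u1*v2-u2*v1)^2 + (u2*v0-u0*v2)^2 + (u0*v1-u1*v0)^2)
          * ((p1*q2-p2*q1)^2 + (p2*q0-p0*q2)^2 + (p0*q1-p1*q0)^2) := i2
      _ = G := by rw [i3, hGsq]; ring
  have hcross : x*y - w*z ≤ Real.sqrt G := by
    calc x*y - w*z ≤ |x*y - w*z| := le_abs_self _
      _ = Real.sqrt ((x*y - w*z)^2) := (Real.sqrt_sq_eq_abs _).symm
      _ ≤ Real.sqrt G := Real.sqrt_le_sqrt hbc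
  have bessel1 : x^2 + w^2 ≤ UU := by
    have e : UU - x^2 - w^2 = (u0 - x*p0 - w*q0)^2 + (u1 - x*p1 - w*q1)^2
        + (u2 - x*p2 - w*q2)^2 := by
      rw [hx, hw, hUU]
      linear_combination (-((p0*u0+p1*u1+p2*u2)^2))*hp + (-((q0*u0+q1*u1+q2*u2)^2))*hq
        + (-(2*(p0*u0+p1*u1+p2*u2)*(q0*u0+q1*u1+q2*u2)))*hpq
    linarith [e, sq_nonneg (u0 - x*p0 - w*q0), sq_nonneg (u1 - x*p1 - w*q1),
      sq_nonneg (u2 - x*p2 - w*q2)]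
  have bessel2 : y^2 + z^2 ≤ VV := by
    have e : VV - y^2 - z^2 = (v0 - z*p0 - y*q0)^2 + (v1 - z*p1 - y*q1)^2
        + (v2 - z*p2 - y*q2)^2 := by
      rw [hy, hz, hVV]
      linear_combination (-((p0*v0+p1*v1+p2*v2)^2))*hp + (-((q0*v0+q1*v1+q2*v2)^2))*hq
        + (-(2*(p0*v0+p1*v1+p2*v2)*(q0*v0+q1*v1+q2*v2)))*hpq
    linarith [e, sq_nonneg (v0 - z*p0 - y*q0), sq_nonneg (v1 - z*p1 - y*q1),
      sq_nonneg (v2 - z*p2 - y*q2)]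
  have hsq : (x+y)^2 ≤ UU + VV + 2*Real.sqrt G := by
    have ex : (x+y)^2 = x^2 + y^2 + 2*(x*y) := by ring
    have e2 : 2*(w*z) ≤ w^2 + z^2 := by nlinarith [sq_nonneg (w - z)]
    linarith [ex, e2, hcross, bessel1, bessel2]
  calc x + y ≤ |x+y| := le_abs_self _
    _ = Real.sqrt ((x+y)^2) := (Real.sqrt_sq_eq_abs _).symm
    _ ≤ Real.sqrt (UU + VV + 2*Real.sqrt G) := Real.sqrt_le_sqrt hsq



variable {n : Type*} [Fintype n] [DecidableEq n] {R : Type*} [CommRing R]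

lemma charmatrix_conj (U A V : Matrix n n R) (hUV : U * V = 1) :
    charmatrix (U * A * V) = (C : R →+* R[X]).mapMatrix U * charmatrix A
      * (C : R →+* R[X]).mapMatrix V := by
  have hmap1 : (C : R →+* R[X]).mapMatrix U * (C : R →+* R[X]).mapMatrix V = 1 := by
    rw [← _root_.map_mul, hUV, _root_.map_one]
  rw [charmatrix, charmatrix, mul_sub, sub_mul]
  congr 1
  · rw [← ((Matrix.scalar_commute (X : R[X]) (fun r' => Commute.all X r')
      ((C : R →+* R[X]).mapMatrix U))).eq, mul_assoc, hmap1, mul_one]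
  · rw [_root_.map_mul, _root_.map_mul]

lemma charpoly_conj (U A V : Matrix n n R) (hUV : U * V = 1) (hVU : V * U = 1) :
    (U * A * V).charpoly = A.charpoly := by
  have hdet : ((C : R →+* R[X]).mapMatrix U).det * ((C : R →+* R[X]).mapMatrix V).det = 1 := by
    rw [← det_mul, ← _root_.map_mul, hUV]
    simp
  rw [Matrix.charpoly, Matrix.charpoly, charmatrix_conj U A V hUV, det_mul, det_mul,
    mul_right_comm, hdet, one_mul]

lemma charpoly_diagonal (d : n → R) :
    (diagonal d).charpoly = ∏ i, (X - C (d i)) := by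
  rw [Matrix.charpoly]
  have : charmatrix (diagonal d) = diagonal (fun i => (X : R[X]) - C (d i)) := by
    ext i j
    by_cases h : i = j
    · subst h; simp [charmatrix_apply_eq]
    · simp [charmatrix_apply_ne _ _ _ h, diagonal_apply_ne _ h]
  rw [this, det_diagonal]

-- permutation extraction
lemma cancel_lin {a b e : ℝ} (h : (X - C a) * (X - C b) = (X - C a) * (X - C e)) : b = e := by
  have h2 := mul_left_cancel₀ (X_sub_C_ne_zero a) h
  have h3 : (C b : ℝ[X]) = C e := by linear_combination -h2
  exact C_injective h3

lemma perm2 {a b d e : ℝ} (h : (X - C a) * (X - C b) = (X - C d) * (X - C e)) :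
    (a = d ∧ b = e) ∨ (a = e ∧ b = d) := by
  have hev := congrArg (Polynomial.eval a) h
  simp only [eval_mul, eval_sub, eval_X, eval_C, sub_self, zero_mul] at hev
  rcases mul_eq_zero.1 hev.symm with h1 | h1
  · have had : a = d := by have := sub_eq_zero.1 h1; linarith
    subst had
    exact Or.inl ⟨rfl, cancel_lin (a := a) (by linear_combination h)⟩
  · have hae : a = e := by have := sub_eq_zero.1 h1; linarith
    subst hae
    exact Or.inr ⟨rfl, cancel_lin (a := a) (by linear_combination h)⟩

lemma perm3 {μ : Fin 3 → ℝ} {l1 l2 l3 : ℝ}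
    (h : (X - C (μ 0)) * (X - C (μ 1)) * (X - C (μ 2))
      = (X - C l1) * (X - C l2) * (X - C l3)) :
    ∃ σ : Equiv.Perm (Fin 3), μ (σ 0) = l1 ∧ μ (σ 1) = l2 ∧ μ (σ 2) = l3 := by
  have hev := congrArg (Polynomial.eval l1) h
  simp only [eval_mul, eval_sub, eval_X, eval_C, sub_self, mul_zero, zero_mul] at hev
  rcases mul_eq_zero.1 hev with h1 | h1
  rcases mul_eq_zero.1 h1 with h2 | h2
  · -- μ 0 = l1
    have h0 : μ 0 = l1 := by have := sub_eq_zero.1 h2; linarith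
    rw [h0] at h
    have hc : (X - C l1) * ((X - C (μ 1)) * (X - C (μ 2)))
        = (X - C l1) * ((X - C l2) * (X - C l3)) := by linear_combination h
    have := mul_left_cancel₀ (X_sub_C_ne_zero _) hc
    rcases perm2 this with ⟨e1, e2⟩ | ⟨e1, e2⟩
    · exact ⟨1, h0, e1, e2⟩
    · exact ⟨⟨![0,2,1], ![0,2,1], by decide, by decide⟩, h0, e2, e1⟩
  · -- μ 1 = l1
    have h0 : μ 1 = l1 := by have := sub_eq_zero.1 h2; linarith
    rw [h0] at h
    have hc : (X - C l1) * ((X - C (μ 0)) * (X - C (μ 2)))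
        = (X - C l1) * ((X - C l2) * (X - C l3)) := by linear_combination h
    have := mul_left_cancel₀ (X_sub_C_ne_zero _) hc
    rcases perm2 this with ⟨e1, e2⟩ | ⟨e1, e2⟩
    · exact ⟨⟨![1,0,2], ![1,0,2], by decide, by decide⟩, h0, e1, e2⟩
    · exact ⟨⟨![1,2,0], ![2,0,1], by decide, by decide⟩, h0, e2, e1⟩
  · -- μ 2 = l1
    have h0 : μ 2 = l1 := by have := sub_eq_zero.1 h1; linarith
    rw [h0] at h
    have hc : (X - C l1) * ((X - C (μ 0)) * (X - C (μ 1)))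
        = (X - C l1) * ((X - C l2) * (X - C l3)) := by linear_combination h
    have := mul_left_cancel₀ (X_sub_C_ne_zero _) hc
    rcases perm2 this with ⟨e1, e2⟩ | ⟨e1, e2⟩
    · exact ⟨⟨![2,0,1], ![1,2,0], by decide, by decide⟩, h0, e1, e2⟩
    · exact ⟨⟨![2,1,0], ![2,1,0], by decide, by decide⟩, h0, e2, e1⟩





lemma cs3_dot (x y : Fin 3 → ℝ) : (x ⬝ᵥ y)^2 ≤ (x ⬝ᵥ x) * (y ⬝ᵥ y) := by
  have h := cs3 (x 0) (x 1) (x 2) (y 0) (y 1) (y 2)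
  have e1 : x ⬝ᵥ y = x 0 * y 0 + x 1 * y 1 + x 2 * y 2 := by
    simp [dotProduct, Fin.sum_univ_three]
  have e2 : x ⬝ᵥ x = x 0^2 + x 1^2 + x 2^2 := by
    simp [dotProduct, Fin.sum_univ_three]; ring
  have e3 : y ⬝ᵥ y = y 0^2 + y 1^2 + y 2^2 := by
    simp [dotProduct, Fin.sum_univ_three]; ring
  rw [e1, e2, e3]; exact h

lemma freeSide_dot (u v p q : Fin 3 → ℝ) (hp : p ⬝ᵥ p = 1) (hq : q ⬝ᵥ q = 1)
    (hpq : p ⬝ᵥ q = 0) :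
    p ⬝ᵥ u + q ⬝ᵥ v ≤ Real.sqrt ((u ⬝ᵥ u) + (v ⬝ᵥ v)
      + 2*Real.sqrt ((u ⬝ᵥ u)*(v ⬝ᵥ v) - (u ⬝ᵥ v)^2)) := by
  have e : ∀ x y : Fin 3 → ℝ, x ⬝ᵥ y = x 0 * y 0 + x 1 * y 1 + x 2 * y 2 := by
    intro x y; simp [dotProduct, Fin.sum_univ_three]
  have esq : ∀ x : Fin 3 → ℝ, x ⬝ᵥ x = x 0^2 + x 1^2 + x 2^2 := by
    intro x; rw [e]; ring
  rw [e p u, e q v, esq u, esq v, e u v]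
  exact freeSide (u 0) (u 1) (u 2) (v 0) (v 1) (v 2) (p 0) (p 1) (p 2) (q 0) (q 1) (q 2)
    (by rw [← esq p, hp]) (by rw [← esq q, hq]) (by rw [← e p q, hpq])

lemma exists_unit_orth (p : Fin 3 → ℝ) : ∃ q : Fin 3 → ℝ, q ⬝ᵥ q = 1 ∧ p ⬝ᵥ q = 0 := by
  by_cases h : p 0 = 0 ∧ p 1 = 0
  · exact ⟨![1,0,0], by simp [dotProduct, Fin.sum_univ_three],
      by simp [dotProduct, Fin.sum_univ_three, h.1]⟩
  · have hr : 0 < p 0^2 + p 1^2 := by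
      rcases not_and_or.1 h with h0 | h0 <;> positivity
    refine ⟨(Real.sqrt (p 0^2 + p 1^2))⁻¹ • ![p 1, -(p 0), 0], ?_, ?_⟩
    · have e : ((Real.sqrt (p 0^2 + p 1^2))⁻¹ • ![p 1, -(p 0), 0]) ⬝ᵥ
          ((Real.sqrt (p 0^2 + p 1^2))⁻¹ • ![p 1, -(p 0), 0])
          = (Real.sqrt (p 0^2 + p 1^2))⁻¹^2 * (p 0^2 + p 1^2) := by
        simp [dotProduct, Fin.sum_univ_three, smul_eq_mul]; ring
      rw [e, inv_pow, Real.sq_sqrt (le_of_lt hr)]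
      field_simp
    · simp [dotProduct, Fin.sum_univ_three, smul_eq_mul]; ring

theorem matrix_core (T : Matrix (Fin 3) (Fin 3) ℝ) (l1 l2 l3 : ℝ)
    (h12 : l2 ≤ l1) (h23 : l3 ≤ l2)
    (hchar : (T * Tᵀ).charpoly = (X - C l1) * (X - C l2) * (X - C l3)) :
    (∀ a1 a2 b1 b2 : Fin 3 → ℝ, a1 ⬝ᵥ a1 = 1 → a2 ⬝ᵥ a2 = 1 → b1 ⬝ᵥ b1 = 1 →
      b2 ⬝ᵥ b2 = 1 → a1 ⬝ᵥ a2 = 0 → b1 ⬝ᵥ b2 = 0 →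
      b1 ⬝ᵥ (Tᵀ *ᵥ (a1 + a2)) + b2 ⬝ᵥ (Tᵀ *ᵥ (a1 - a2))
        ≤ Real.sqrt 2 * (Real.sqrt l1 + Real.sqrt l2)) ∧
    (∃ a1 a2 b1 b2 : Fin 3 → ℝ, a1 ⬝ᵥ a1 = 1 ∧ a2 ⬝ᵥ a2 = 1 ∧ b1 ⬝ᵥ b1 = 1 ∧
      b2 ⬝ᵥ b2 = 1 ∧ a1 ⬝ᵥ a2 = 0 ∧ b1 ⬝ᵥ b2 = 0 ∧
      b1 ⬝ᵥ (Tᵀ *ᵥ (a1 + a2)) + b2 ⬝ᵥ (Tᵀ *ᵥ (a1 - a2))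
        = Real.sqrt 2 * (Real.sqrt l1 + Real.sqrt l2)) := by
  set S := T * Tᵀ with hSdef
  have hS : S.IsHermitian := by
    have h := Matrix.isHermitian_mul_conjTranspose_self T
    rwa [Matrix.conjTranspose_eq_transpose_of_trivial] at h
  set μ : Fin 3 → ℝ := hS.eigenvalues with hμdef
  set U : Matrix (Fin 3) (Fin 3) ℝ := (hS.eigenvectorUnitary : Matrix (Fin 3) (Fin 3) ℝ)
    with hUdef
  have hU2 : Uᵀ * U = 1 := by
    have h := (Unitary.mem_iff.mp hS.eigenvectorUnitary.2).1
    rwa [Matrix.star_eq_conjTranspose, Matrix.conjTranspose_eq_transpose_of_trivial] at h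
  have hU1 : U * Uᵀ = 1 := by
    have h := (Unitary.mem_iff.mp hS.eigenvectorUnitary.2).2
    rwa [Matrix.star_eq_conjTranspose, Matrix.conjTranspose_eq_transpose_of_trivial] at h
  have hspec : S = U * diagonal μ * Uᵀ := by
    have h := hS.spectral_theorem
    rw [Unitary.conjStarAlgAut_apply, Matrix.star_eq_conjTranspose, Matrix.conjTranspose_eq_transpose_of_trivial,
      RCLike.ofReal_real_eq_id, Function.id_comp] at h
    exact h
  -- eigenvalue permutation
  have hcp : (X - C (μ 0)) * (X - C (μ 1)) * (X - C (μ 2))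
      = (X - C l1) * (X - C l2) * (X - C l3) := by
    rw [← Fin.prod_univ_three (fun i => (X - C (μ i))), ← charpoly_diagonal μ,
      ← charpoly_conj U (diagonal μ) Uᵀ hU1 hU2, ← hspec, hchar]
  obtain ⟨σ, hσ0, hσ1, hσ2⟩ := perm3 hcp
  -- column eigenvector facts
  have hw12 : ∀ i j, (fun k => U k i) ⬝ᵥ (fun k => U k j)
      = (1 : Matrix (Fin 3) (Fin 3) ℝ) i j := by
    intro i j
    have h := congrFun (congrFun hU2 i) j
    simpa [Matrix.mul_apply, dotProduct, Matrix.transpose_apply, mul_comm] using h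
  have hSU : S * U = U * diagonal μ := by
    rw [hspec, mul_assoc, hU2, mul_one]
  have hcol : ∀ i, S *ᵥ (fun k => U k i) = μ i • (fun k => U k i) := by
    intro i
    funext j
    simp only [Matrix.mulVec, dotProduct, Pi.smul_apply, smul_eq_mul]
    calc ∑ k, S j k * U k i = (S * U) j i := (Matrix.mul_apply).symm
      _ = (U * diagonal μ) j i := by rw [hSU]
      _ = U j i * μ i := Matrix.mul_diagonal _ _ _ _
      _ = μ i * U j i := mul_comm _ _
  -- quadratic form via Tᵀ
  have hquadS : ∀ x y : Fin 3 → ℝ, (Tᵀ *ᵥ x) ⬝ᵥ (Tᵀ *ᵥ y) = x ⬝ᵥ (S *ᵥ y) := by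
    intro x y
    rw [hSdef, ← Matrix.mulVec_mulVec, Matrix.dotProduct_mulVec x T,
      Matrix.mulVec_transpose]
  have hquad : ∀ x y : Fin 3 → ℝ,
      (Tᵀ *ᵥ x) ⬝ᵥ (Tᵀ *ᵥ y) = ∑ i, μ i * ((Uᵀ *ᵥ x) i) * ((Uᵀ *ᵥ y) i) := by
    intro x y
    rw [hquadS, hspec, ← Matrix.mulVec_mulVec, ← Matrix.mulVec_mulVec,
      Matrix.dotProduct_mulVec x U, ← Matrix.mulVec_transpose]
    simp only [dotProduct, Matrix.mulVec_diagonal]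
    exact Finset.sum_congr rfl (fun i _ => by ring)
  have hpars : ∀ x y : Fin 3 → ℝ, (Uᵀ *ᵥ x) ⬝ᵥ (Uᵀ *ᵥ y) = x ⬝ᵥ y := by
    intro x y
    rw [Matrix.mulVec_transpose U x, ← Matrix.dotProduct_mulVec,
      Matrix.mulVec_mulVec, hU1, Matrix.one_mulVec]
  -- nonnegativity of eigenvalues
  have hμnn : ∀ i, 0 ≤ μ i := by
    intro i
    have h := hquadS (fun k => U k i) (fun k => U k i)
    rw [hcol i] at h
    have h2 : (fun k => U k i) ⬝ᵥ (μ i • fun k => U k i) = μ i := by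
      rw [dotProduct_smul, hw12 i i, Matrix.one_apply_eq, smul_eq_mul, mul_one]
    rw [h2] at h
    rw [← h]
    exact Finset.sum_nonneg (fun k _ => mul_self_nonneg _)
  have hl1 : 0 ≤ l1 := hσ0 ▸ hμnn (σ 0)
  have hl2 : 0 ≤ l2 := hσ1 ▸ hμnn (σ 1)
  -- sqrt algebra
  have hrt : Real.sqrt (2*(l1+l2) + 2*Real.sqrt (4*(l1*l2)))
      = Real.sqrt 2 * (Real.sqrt l1 + Real.sqrt l2) := by
    have h4 : Real.sqrt (4*(l1*l2)) = 2*(Real.sqrt l1 * Real.sqrt l2) := by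
      rw [show (4:ℝ)*(l1*l2) = (2*(Real.sqrt l1 * Real.sqrt l2))^2 by
        rw [mul_pow, mul_pow, Real.sq_sqrt hl1, Real.sq_sqrt hl2]; ring]
      exact Real.sqrt_sq (by positivity)
    have h5 : 2*(l1+l2) + 2*(2*(Real.sqrt l1 * Real.sqrt l2))
        = (Real.sqrt 2 * (Real.sqrt l1 + Real.sqrt l2))^2 := by
      rw [mul_pow, Real.sq_sqrt (by norm_num : (0:ℝ) ≤ 2), add_sq,
        Real.sq_sqrt hl1, Real.sq_sqrt hl2]
      ring
    rw [h4, h5, Real.sqrt_sq (by positivity)]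
  constructor
  · -- upper bound
    intro a1 a2 b1 b2 ha1 ha2 hb1 hb2 ha12 hb12
    set α : Fin 3 → ℝ := Uᵀ *ᵥ a1 with hα
    set β : Fin 3 → ℝ := Uᵀ *ᵥ a2 with hβ
    have hαα : α ⬝ᵥ α = 1 := by rw [hα, hpars]; exact ha1
    have hββ : β ⬝ᵥ β = 1 := by rw [hβ, hpars]; exact ha2
    have hαβ : α ⬝ᵥ β = 0 := by rw [hα, hβ, hpars]; exact ha12
    set A0 := α (σ 0) with hA0; set A1 := α (σ 1) with hA1; set A2 := α (σ 2) with hA2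
    set B0 := β (σ 0) with hB0; set B1 := β (σ 1) with hB1; set B2 := β (σ 2) with hB2
    have hsum3 : ∀ X Y : Fin 3 → ℝ, X ⬝ᵥ Y
        = X (σ 0) * Y (σ 0) + X (σ 1) * Y (σ 1) + X (σ 2) * Y (σ 2) := by
      intro X Y
      rw [dotProduct, ← Equiv.sum_comp σ (fun i => X i * Y i), Fin.sum_univ_three]
    have hAA : A0^2 + A1^2 + A2^2 = 1 := by
      rw [hA0, hA1, hA2, ← hαα, hsum3 α α]; ring
    have hBB : B0^2 + B1^2 + B2^2 = 1 := by
      rw [hB0, hB1, hB2, ← hββ, hsum3 β β]; ring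
    have hAB : A0*B0 + A1*B1 + A2*B2 = 0 := by
      rw [hA0, hA1, hA2, hB0, hB1, hB2, ← hαβ, hsum3 α β]
    have hμsum : ∀ X Y : Fin 3 → ℝ, (∑ i, μ i * X i * Y i)
        = l1 * X (σ 0) * Y (σ 0) + l2 * X (σ 1) * Y (σ 1) + l3 * X (σ 2) * Y (σ 2) := by
      intro X Y
      rw [← Equiv.sum_comp σ (fun i => μ i * X i * Y i), Fin.sum_univ_three, hσ0, hσ1, hσ2]
    have hadd : Uᵀ *ᵥ (a1 + a2) = fun i => α i + β i := by
      rw [Matrix.mulVec_add]; rfl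
    have hsub : Uᵀ *ᵥ (a1 - a2) = fun i => α i - β i := by
      rw [Matrix.mulVec_sub]; rfl
    set u : Fin 3 → ℝ := Tᵀ *ᵥ (a1 + a2) with hu
    set v : Fin 3 → ℝ := Tᵀ *ᵥ (a1 - a2) with hv
    have huu : u ⬝ᵥ u = l1*(A0+B0)*(A0+B0) + l2*(A1+B1)*(A1+B1) + l3*(A2+B2)*(A2+B2) := by
      rw [hu, hquad, hadd, hμsum]
    have hvv : v ⬝ᵥ v = l1*(A0-B0)*(A0-B0) + l2*(A1-B1)*(A1-B1) + l3*(A2-B2)*(A2-B2) := by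
      rw [hv, hquad, hsub, hμsum]
    have huv : u ⬝ᵥ v = l1*(A0+B0)*(A0-B0) + l2*(A1+B1)*(A1-B1) + l3*(A2+B2)*(A2-B2) := by
      rw [hu, hv, hquad, hadd, hsub, hμsum]
    have kf := kyfan l1 l2 l3 A0 A1 A2 B0 B1 B2 h12 h23 hAA hBB hAB
    have gr := gram l1 l2 l3 A0 A1 A2 B0 B1 B2 h12 h23 hl1 hl2 hAA hBB hAB
    have bound1 : u ⬝ᵥ u + v ⬝ᵥ v ≤ 2*(l1+l2) := by
      have e : u ⬝ᵥ u + v ⬝ᵥ v = 2*((l1*A0^2+l2*A1^2+l3*A2^2) + (l1*B0^2+l2*B1^2+l3*B2^2)) := by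
        rw [huu, hvv]; ring
      linarith
    have bound2 : (u ⬝ᵥ u)*(v ⬝ᵥ v) - (u ⬝ᵥ v)^2 ≤ 4*(l1*l2) := by
      have e : (u ⬝ᵥ u)*(v ⬝ᵥ v) - (u ⬝ᵥ v)^2
          = 4*((l1*A0^2+l2*A1^2+l3*A2^2) * (l1*B0^2+l2*B1^2+l3*B2^2)
            - (l1*A0*B0+l2*A1*B1+l3*A2*B2)^2) := by
        rw [huu, hvv, huv]; ring
      linarith
    calc b1 ⬝ᵥ u + b2 ⬝ᵥ v
        ≤ Real.sqrt ((u ⬝ᵥ u) + (v ⬝ᵥ v) + 2*Real.sqrt ((u ⬝ᵥ u)*(v ⬝ᵥ v) - (u ⬝ᵥ v)^2)) :=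
          freeSide_dot u v b1 b2 hb1 hb2 hb12
      _ ≤ Real.sqrt (2*(l1+l2) + 2*Real.sqrt (4*(l1*l2))) := by
          apply Real.sqrt_le_sqrt
          have := Real.sqrt_le_sqrt bound2
          linarith
      _ = Real.sqrt 2 * (Real.sqrt l1 + Real.sqrt l2) := hrt
  · -- attainment
    have hi12 : σ 0 ≠ σ 1 := fun h => by simpa using σ.injective h
    set w1 : Fin 3 → ℝ := fun k => U k (σ 0) with hw1def
    set w2 : Fin 3 → ℝ := fun k => U k (σ 1) with hw2def
    have hw11 : w1 ⬝ᵥ w1 = 1 := by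
      have := hw12 (σ 0) (σ 0); rwa [Matrix.one_apply_eq] at this
    have hw22 : w2 ⬝ᵥ w2 = 1 := by
      have := hw12 (σ 1) (σ 1); rwa [Matrix.one_apply_eq] at this
    have hw12' : w1 ⬝ᵥ w2 = 0 := by
      have := hw12 (σ 0) (σ 1); rwa [Matrix.one_apply_ne hi12] at this
    have hw21' : w2 ⬝ᵥ w1 = 0 := by
      have := hw12 (σ 1) (σ 0); rwa [Matrix.one_apply_ne hi12.symm] at this
    set u1 : Fin 3 → ℝ := Tᵀ *ᵥ w1 with hu1def
    set v1 : Fin 3 → ℝ := Tᵀ *ᵥ w2 with hv1def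
    have q11 : u1 ⬝ᵥ u1 = l1 := by
      rw [hu1def, hquadS, hcol (σ 0), dotProduct_smul, smul_eq_mul, hw11, mul_one, hσ0]
    have q22 : v1 ⬝ᵥ v1 = l2 := by
      rw [hv1def, hquadS, hcol (σ 1), dotProduct_smul, smul_eq_mul, hw22, mul_one, hσ1]
    have q12 : u1 ⬝ᵥ v1 = 0 := by
      rw [hu1def, hv1def, hquadS, hcol (σ 1), dotProduct_smul, smul_eq_mul, hw12',
        mul_zero]
    set c : ℝ := Real.sqrt 2 / 2 with hcdef
    have hc2 : c^2 = 1/2 := by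
      rw [hcdef, div_pow, Real.sq_sqrt (by norm_num : (0:ℝ) ≤ 2)]; norm_num
    set a1 : Fin 3 → ℝ := c • (w1 + w2) with ha1def
    set a2 : Fin 3 → ℝ := c • (w1 - w2) with ha2def
    have ha1 : a1 ⬝ᵥ a1 = 1 := by
      have e : a1 ⬝ᵥ a1 = c^2 * ((w1 ⬝ᵥ w1) + (w1 ⬝ᵥ w2) + (w2 ⬝ᵥ w1) + (w2 ⬝ᵥ w2)) := by
        rw [ha1def]
        simp only [smul_dotProduct, dotProduct_smul, add_dotProduct,
          dotProduct_add, smul_eq_mul]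
        ring
      rw [e, hw11, hw22, hw12', hw21', hc2]; norm_num
    have ha2 : a2 ⬝ᵥ a2 = 1 := by
      have e : a2 ⬝ᵥ a2 = c^2 * ((w1 ⬝ᵥ w1) - (w1 ⬝ᵥ w2) - (w2 ⬝ᵥ w1) + (w2 ⬝ᵥ w2)) := by
        rw [ha2def]
        simp only [smul_dotProduct, dotProduct_smul, sub_dotProduct,
          dotProduct_sub, smul_eq_mul]
        ring
      rw [e, hw11, hw22, hw12', hw21', hc2]; norm_num
    have ha12 : a1 ⬝ᵥ a2 = 0 := by
      have e : a1 ⬝ᵥ a2 = c^2 * ((w1 ⬝ᵥ w1) - (w1 ⬝ᵥ w2) + (w2 ⬝ᵥ w1) - (w2 ⬝ᵥ w2)) := by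
        rw [ha1def, ha2def]
        simp only [smul_dotProduct, dotProduct_smul, add_dotProduct,
          sub_dotProduct, dotProduct_add, dotProduct_sub, smul_eq_mul]
        ring
      rw [e, hw11, hw22, hw12', hw21']; ring
    have hsum : a1 + a2 = Real.sqrt 2 • w1 := by
      funext k
      have : 2 * c = Real.sqrt 2 := by rw [hcdef]; ring
      simp only [ha1def, ha2def, Pi.add_apply, Pi.smul_apply, Pi.sub_apply, smul_eq_mul]
      rw [← this]; ring
    have hdiff : a1 - a2 = Real.sqrt 2 • w2 := by
      funext k
      have : 2 * c = Real.sqrt 2 := by rw [hcdef]; ring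
      simp only [ha1def, ha2def, Pi.sub_apply, Pi.add_apply, Pi.smul_apply, smul_eq_mul]
      rw [← this]; ring
    have hval : ∀ b1 b2 : Fin 3 → ℝ,
        b1 ⬝ᵥ (Tᵀ *ᵥ (a1 + a2)) + b2 ⬝ᵥ (Tᵀ *ᵥ (a1 - a2))
          = Real.sqrt 2 * (b1 ⬝ᵥ u1) + Real.sqrt 2 * (b2 ⬝ᵥ v1) := by
      intro b1 b2
      rw [hsum, hdiff, Matrix.mulVec_smul, Matrix.mulVec_smul, dotProduct_smul,
        dotProduct_smul, smul_eq_mul, smul_eq_mul, hu1def, hv1def]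
    by_cases h1z : l1 = 0
    · -- l1 = l2 = 0
      have h2z : l2 = 0 := le_antisymm (h1z ▸ h12) hl2
      refine ⟨a1, a2, ![1,0,0], ![0,1,0], ha1, ha2,
        by simp [dotProduct, Fin.sum_univ_three],
        by simp [dotProduct, Fin.sum_univ_three], ha12,
        by simp [dotProduct, Fin.sum_univ_three], ?_⟩
      have hbu : (![1,0,0] : Fin 3 → ℝ) ⬝ᵥ u1 = 0 := by
        have h := cs3_dot ![1,0,0] u1
        rw [q11, h1z, mul_zero] at h
        have := sq_nonneg ((![1,0,0] : Fin 3 → ℝ) ⬝ᵥ u1)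
        nlinarith
      have hbv : (![0,1,0] : Fin 3 → ℝ) ⬝ᵥ v1 = 0 := by
        have h := cs3_dot ![0,1,0] v1
        rw [q22, h2z, mul_zero] at h
        nlinarith [sq_nonneg ((![0,1,0] : Fin 3 → ℝ) ⬝ᵥ v1)]
      rw [hval, hbu, hbv, h1z, h2z, Real.sqrt_zero]
      ring
    · have h1pos : 0 < l1 := lt_of_le_of_ne hl1 (Ne.symm h1z)
      set b1 : Fin 3 → ℝ := (Real.sqrt l1)⁻¹ • u1 with hb1def
      have hs1 : Real.sqrt l1 ≠ 0 := by positivity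
      have hb11 : b1 ⬝ᵥ b1 = 1 := by
        rw [hb1def, smul_dotProduct, dotProduct_smul, smul_eq_mul, smul_eq_mul,
          q11]
        rw [← Real.sq_sqrt hl1]
        field_simp
        rw [Real.sqrt_sq (Real.sqrt_nonneg _)]
      have hb1u : b1 ⬝ᵥ u1 = Real.sqrt l1 := by
        rw [hb1def, smul_dotProduct, smul_eq_mul, q11, ← Real.sq_sqrt hl1]
        field_simp
        rw [Real.sqrt_sq (Real.sqrt_nonneg _)]
      by_cases h2z : l2 = 0
      · obtain ⟨b2, hb22, hb12⟩ := exists_unit_orth b1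
        refine ⟨a1, a2, b1, b2, ha1, ha2, hb11, hb22, ha12, hb12, ?_⟩
        have hbv : b2 ⬝ᵥ v1 = 0 := by
          have h := cs3_dot b2 v1
          rw [q22, h2z, mul_zero] at h
          nlinarith [sq_nonneg (b2 ⬝ᵥ v1)]
        rw [hval, hb1u, hbv, h2z, Real.sqrt_zero]
        ring
      · have h2pos : 0 < l2 := lt_of_le_of_ne hl2 (Ne.symm h2z)
        set b2 : Fin 3 → ℝ := (Real.sqrt l2)⁻¹ • v1 with hb2def
        have hs2 : Real.sqrt l2 ≠ 0 := by positivity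
        have hb22 : b2 ⬝ᵥ b2 = 1 := by
          rw [hb2def, smul_dotProduct, dotProduct_smul, smul_eq_mul, smul_eq_mul,
            q22]
          rw [← Real.sq_sqrt hl2]
          field_simp
          rw [Real.sqrt_sq (Real.sqrt_nonneg _)]
        have hb2v : b2 ⬝ᵥ v1 = Real.sqrt l2 := by
          rw [hb2def, smul_dotProduct, smul_eq_mul, q22, ← Real.sq_sqrt hl2]
          field_simp
          rw [Real.sqrt_sq (Real.sqrt_nonneg _)]
        have hb12 : b1 ⬝ᵥ b2 = 0 := by
          rw [hb1def, hb2def, smul_dotProduct, dotProduct_smul, smul_eq_mul,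
            smul_eq_mul, q12]
          ring
        refine ⟨a1, a2, b1, b2, ha1, ha2, hb11, hb22, ha12, hb12, ?_⟩
        rw [hval, hb1u, hb2v]
        ring



lemma corrE_eq (ρ : Matrix (Fin 2 × Fin 2) (Fin 2 × Fin 2) ℂ)
    (a b : EuclideanSpace ℝ (Fin 3)) :
    corrE ρ a b = ∑ i, ∑ j, a i * b j * corrMatrix ρ i j := by
  have hk : pauliVec a ⊗ₖ pauliVec b
      = ∑ i : Fin 3, ∑ j : Fin 3, (((a i : ℂ)) * ((b j : ℂ))) • (pauli i ⊗ₖ pauli j) := by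
    rw [show pauliVec a = (a 0 : ℂ) • σ₁ + (a 1 : ℂ) • σ₂ + (a 2 : ℂ) • σ₃ from rfl,
      show pauliVec b = (b 0 : ℂ) • σ₁ + (b 1 : ℂ) • σ₂ + (b 2 : ℂ) • σ₃ from rfl]
    simp only [add_kronecker, kronecker_add, smul_kronecker, kronecker_smul,
      Fin.sum_univ_three, pauli, Matrix.cons_val_zero, Matrix.cons_val_one, Matrix.head_cons,
      Matrix.cons_val_two, Matrix.tail_cons, smul_smul, smul_add]
    module
  rw [corrE, hk]
  simp only [Matrix.mul_sum, Matrix.trace_sum, Complex.re_sum, Matrix.mul_smul,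
    Matrix.trace_smul, smul_eq_mul]
  refine Finset.sum_congr rfl fun i _ => Finset.sum_congr rfl fun j _ => ?_
  rw [← Complex.ofReal_mul]
  simp [Complex.mul_re, corrMatrix]

lemma chsh_eq (ρ : Matrix (Fin 2 × Fin 2) (Fin 2 × Fin 2) ℂ)
    (a1 a2 b1 b2 : EuclideanSpace ℝ (Fin 3)) :
    CHSHval ρ a1 a2 b1 b2
      = (fun i => b1 i) ⬝ᵥ ((corrMatrix ρ)ᵀ *ᵥ (fun i => a1 i + a2 i))
        + (fun i => b2 i) ⬝ᵥ ((corrMatrix ρ)ᵀ *ᵥ (fun i => a1 i - a2 i)) := by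
  rw [CHSHval, corrE_eq, corrE_eq, corrE_eq, corrE_eq]
  simp only [dotProduct, Matrix.mulVec, Matrix.transpose_apply, Fin.sum_univ_three]
  ring

lemma norm_dot (x : EuclideanSpace ℝ (Fin 3)) (h : ‖x‖ = 1) :
    (fun i => x i) ⬝ᵥ (fun i => x i) = 1 := by
  have h2 : ‖x‖^2 = 1 := by rw [h]; norm_num
  rw [EuclideanSpace.norm_eq, Real.sq_sqrt (by positivity)] at h2
  simp only [dotProduct]
  rw [← h2]
  exact Finset.sum_congr rfl fun i _ => by
    rw [Real.norm_eq_abs, sq_abs, sq]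

lemma dot_norm (x : EuclideanSpace ℝ (Fin 3)) (h : (fun i => x i) ⬝ᵥ (fun i => x i) = 1) :
    ‖x‖ = 1 := by
  rw [EuclideanSpace.norm_eq]
  have : ∑ i, ‖x i‖^2 = 1 := by
    rw [← h]
    exact Finset.sum_congr rfl fun i _ => by rw [Real.norm_eq_abs, sq_abs, sq]
  rw [this, Real.sqrt_one]

lemma rip_dot (x y : EuclideanSpace ℝ (Fin 3)) :
    rip x y = (fun i => x i) ⬝ᵥ (fun i => y i) := by
  rw [rip, PiLp.inner_apply]
  simp [RCLike.inner_apply, dotProduct]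
  exact Finset.sum_congr rfl fun i _ => mul_comm _ _


end CHSHaux

/-- `√2(√λ1 + √λ2)` is the greatest CHSH value of a two-qubit state `ρ` over
quadruples of unit vectors with `a1 ⟂ a2` and `b1 ⟂ b2` (mutually unbiased measurements). -/
theorem chsh_mub_isGreatest (ρ : Matrix (Fin 2 × Fin 2) (Fin 2 × Fin 2) ℂ)
    (hρ : ρ.PosSemidef) (htr : ρ.trace = 1)
    (l1 l2 l3 : ℝ) (h12 : l2 ≤ l1) (h23 : l3 ≤ l2)
    (hchar : (corrMatrix ρ * (corrMatrix ρ)ᵀ).charpoly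
      = (X - C l1) * (X - C l2) * (X - C l3)) :
    IsGreatest {s : ℝ | ∃ a1 a2 b1 b2 : EuclideanSpace ℝ (Fin 3),
        ‖a1‖ = 1 ∧ ‖a2‖ = 1 ∧ ‖b1‖ = 1 ∧ ‖b2‖ = 1 ∧
        rip a1 a2 = 0 ∧ rip b1 b2 = 0 ∧ s = CHSHval ρ a1 a2 b1 b2}
      (Real.sqrt 2 * (Real.sqrt l1 + Real.sqrt l2)) := by

  obtain ⟨hbound, hex⟩ := CHSHaux.matrix_core (corrMatrix ρ) l1 l2 l3 h12 h23 hchar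
  constructor
  · obtain ⟨a1, a2, b1, b2, ha1, ha2, hb1, hb2, ha12, hb12, hvaleq⟩ := hex
    refine ⟨(EuclideanSpace.equiv (Fin 3) ℝ).symm a1, (EuclideanSpace.equiv (Fin 3) ℝ).symm a2,
      (EuclideanSpace.equiv (Fin 3) ℝ).symm b1, (EuclideanSpace.equiv (Fin 3) ℝ).symm b2,
      CHSHaux.dot_norm _ ha1, CHSHaux.dot_norm _ ha2, CHSHaux.dot_norm _ hb1, CHSHaux.dot_norm _ hb2,
      by rw [CHSHaux.rip_dot]; exact ha12, by rw [CHSHaux.rip_dot]; exact hb12, ?_⟩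
    rw [CHSHaux.chsh_eq]
    exact hvaleq.symm
  · rintro s ⟨a1, a2, b1, b2, h1, h2, h3, h4, h5, h6, rfl⟩
    rw [CHSHaux.chsh_eq]
    exact hbound _ _ _ _ (CHSHaux.norm_dot a1 h1) (CHSHaux.norm_dot a2 h2) (CHSHaux.norm_dot b1 h3) (CHSHaux.norm_dot b2 h4)
      (by rw [← CHSHaux.rip_dot a1 a2]; exact h5) (by rw [← CHSHaux.rip_dot b1 b2]; exact h6)

end
end

section
/- Let T be a real 3×3 matrix and let λ1 ≥ λ2 be the two largest eigenvalues of the real symmetric matrix T * Tᵀ. Then for all orthonormal pairs c1, c2 and b1, b2 in EuclideanSpace ℝ (Fin 3) (i.e., ‖c1‖ = ‖c2‖ = ‖b1‖ = ‖b2‖ = 1, ⟪c1,c2⟫ = 0, ⟪b1,b2⟫ = 0), one has ⟪c1, T b1⟫ + ⟪c2, T b2⟫ ≤ √λ1 + √λ2, the sum of the two largest singular values of T. -/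
open Matrix Polynomial
open scoped Kronecker Matrix ComplexOrder

noncomputable section

private def cross3 (u v : Fin 3 → ℝ) : Fin 3 → ℝ :=
  ![u 1 * v 2 - u 2 * v 1, u 2 * v 0 - u 0 * v 2, u 0 * v 1 - u 1 * v 0]

private theorem svb_charpoly_conj (U D : Matrix (Fin 3) (Fin 3) ℝ)
    (hU : U * Uᵀ = 1) : (U * D * Uᵀ).charpoly = D.charpoly := by
  have hmap1 : (U.map (C : ℝ → ℝ[X])) * (Uᵀ.map (C : ℝ → ℝ[X])) = 1 := by
    rw [← Matrix.map_mul, hU, Matrix.map_one _ (map_zero C) (map_one C)]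
  have hcm : charmatrix (U * D * Uᵀ) = (U.map C) * charmatrix D * (Uᵀ.map C) := by
    unfold charmatrix
    rw [mul_sub, sub_mul]
    congr 1
    · rw [← (scalar_commute (X : ℝ[X]) (fun r' => Commute.all X r') (U.map C)).eq,
        mul_assoc, hmap1, mul_one]
    · simp [RingHom.mapMatrix_apply, Matrix.map_mul]
  rw [Matrix.charpoly, hcm, det_mul, det_mul, Matrix.charpoly, mul_comm, ← mul_assoc,
    mul_comm (Uᵀ.map C).det, ← det_mul, hmap1, det_one, one_mul]

private theorem svb_charpoly_diagonal (d : Fin 3 → ℝ) :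
    (diagonal d).charpoly = ∏ i, (X - C (d i)) := by
  have h : charmatrix (diagonal d) = diagonal fun i => X - C (d i) := by
    ext i j
    by_cases h : i = j
    · subst h; simp
    · simp [charmatrix_apply_ne _ _ _ h, diagonal_apply_ne _ h]
  rw [Matrix.charpoly, h, det_diagonal]

private theorem svb_mem (m a b c : ℝ) (h : (m - a) * (m - b) * (m - c) = 0) :
    m = a ∨ m = b ∨ m = c := by
  rcases mul_eq_zero.mp h with h' | h'
  · rcases mul_eq_zero.mp h' with h'' | h''
    · exact Or.inl (sub_eq_zero.mp h'')
    · exact Or.inr (Or.inl (sub_eq_zero.mp h''))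
  · exact Or.inr (Or.inr (sub_eq_zero.mp h'))

private theorem svb_sym (m0 m1 m2 l1 l2 l3 : ℝ)
    (H : ∀ x : ℝ, (x - m0) * (x - m1) * (x - m2) = (x - l1) * (x - l2) * (x - l3)) :
    m0 + m1 + m2 = l1 + l2 + l3 ∧
      m0 * m1 + m0 * m2 + m1 * m2 = l1 * l2 + l1 * l3 + l2 * l3 := by
  have h0 := H 0; have hp := H 1; have hm := H (-1)
  constructor <;> nlinarith [h0, hp, hm]

private theorem svb_bessel (x c1 c2 : Fin 3 → ℝ) (h1 : c1 ⬝ᵥ c1 = 1) (h2 : c2 ⬝ᵥ c2 = 1)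
    (h12 : c1 ⬝ᵥ c2 = 0) : (x ⬝ᵥ c1) ^ 2 + (x ⬝ᵥ c2) ^ 2 ≤ x ⬝ᵥ x := by
  have h0 : (0:ℝ) ≤ ∑ i, (x i - (x ⬝ᵥ c1) * c1 i - (x ⬝ᵥ c2) * c2 i) ^ 2 :=
    Finset.sum_nonneg fun i _ => sq_nonneg _
  have hexp : ∑ i, (x i - (x ⬝ᵥ c1) * c1 i - (x ⬝ᵥ c2) * c2 i) ^ 2
      = x ⬝ᵥ x - (x ⬝ᵥ c1) ^ 2 - (x ⬝ᵥ c2) ^ 2 + (x ⬝ᵥ c1) ^ 2 * (c1 ⬝ᵥ c1 - 1)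
        + (x ⬝ᵥ c2) ^ 2 * (c2 ⬝ᵥ c2 - 1) + 2 * (x ⬝ᵥ c1) * (x ⬝ᵥ c2) * (c1 ⬝ᵥ c2) := by
    simp only [dotProduct, Fin.sum_univ_three]; ring
  rw [h1, h2, h12] at hexp
  nlinarith [h0, hexp]

private theorem svb_cs (x y : Fin 3 → ℝ) : (x ⬝ᵥ y) ^ 2 ≤ (x ⬝ᵥ x) * (y ⬝ᵥ y) := by
  simp only [dotProduct, Fin.sum_univ_three]
  nlinarith [sq_nonneg (x 0 * y 1 - x 1 * y 0), sq_nonneg (x 0 * y 2 - x 2 * y 0),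
    sq_nonneg (x 1 * y 2 - x 2 * y 1)]

private theorem svb_quadform (U : Matrix (Fin 3) (Fin 3) ℝ) (d v w : Fin 3 → ℝ) :
    v ⬝ᵥ (U * diagonal d * Uᵀ) *ᵥ w = ∑ i, d i * ((Uᵀ *ᵥ v) i) * ((Uᵀ *ᵥ w) i) := by
  rw [← mulVec_mulVec, ← mulVec_mulVec, dotProduct_mulVec, ← transpose_transpose U,
    vecMul_transpose, transpose_transpose]
  simp only [dotProduct, mulVec_diagonal, Fin.sum_univ_three]
  ring

private theorem svb_lagrange (u v : Fin 3 → ℝ) :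
    cross3 u v ⬝ᵥ cross3 u v = (u ⬝ᵥ u) * (v ⬝ᵥ v) - (u ⬝ᵥ v) ^ 2 := by
  simp only [cross3, dotProduct, Fin.sum_univ_three, Matrix.cons_val_zero, Matrix.cons_val_one,
    Matrix.head_cons, Matrix.cons_val_two, Matrix.tail_cons]
  ring

private theorem svb_binetcauchy (x y b1 b2 : Fin 3 → ℝ) :
    (x ⬝ᵥ b1) * (y ⬝ᵥ b2) - (x ⬝ᵥ b2) * (y ⬝ᵥ b1)
      = cross3 x y ⬝ᵥ cross3 b1 b2 := by
  simp only [cross3, dotProduct, Fin.sum_univ_three, Matrix.cons_val_zero, Matrix.cons_val_one,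
    Matrix.head_cons, Matrix.cons_val_two, Matrix.tail_cons]
  ring

private theorem svb_binet (m0 m1 m2 a0 a1 a2 b0 b1 b2 : ℝ) :
    (m0 * a0 * a0 + m1 * a1 * a1 + m2 * a2 * a2) * (m0 * b0 * b0 + m1 * b1 * b1 + m2 * b2 * b2)
      - (m0 * a0 * b0 + m1 * a1 * b1 + m2 * a2 * b2) ^ 2
      = m0 * m1 * (a0 * b1 - a1 * b0) ^ 2 + m0 * m2 * (a0 * b2 - a2 * b0) ^ 2
        + m1 * m2 * (a1 * b2 - a2 * b1) ^ 2 := by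
  ring

private theorem svb_abel (m0 m1 m2 B0 B1 B2 l1 l2 l3 : ℝ)
    (h0 : l3 ≤ m0) (h1 : l3 ≤ m1) (h2 : l3 ≤ m2)
    (hB0 : 0 ≤ B0) (hB0' : B0 ≤ 1) (hB1 : 0 ≤ B1) (hB1' : B1 ≤ 1) (hB2 : 0 ≤ B2) (hB2' : B2 ≤ 1)
    (hsB : B0 + B1 + B2 = 2) (hsm : m0 + m1 + m2 = l1 + l2 + l3) :
    m0 * B0 + m1 * B1 + m2 * B2 ≤ l1 + l2 := by
  have hx : l3 * B0 + l3 * B1 + l3 * B2 = 2 * l3 := by linear_combination l3 * hsB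
  nlinarith [hx, mul_nonneg (sub_nonneg.2 h0) (sub_nonneg.2 hB0'),
    mul_nonneg (sub_nonneg.2 h1) (sub_nonneg.2 hB1'),
    mul_nonneg (sub_nonneg.2 h2) (sub_nonneg.2 hB2')]

private theorem svb_pairbound (m p q l1 l2 l3 : ℝ) (h12 : l2 ≤ l1) (h23 : l3 ≤ l2) (h3 : 0 ≤ l3)
    (hmem : m = l1 ∨ m = l2 ∨ m = l3) (hs : m + p + q = l1 + l2 + l3)
    (he : m * p + m * q + p * q = l1 * l2 + l1 * l3 + l2 * l3) : p * q ≤ l1 * l2 := by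
  rcases hmem with h | h | h <;> subst h <;> nlinarith [hs, he]

private theorem svb_sel (e0 e1 e2 w0 w1 w2 L : ℝ)
    (h0 : e0 ≤ L) (h1 : e1 ≤ L) (h2 : e2 ≤ L)
    (hw0 : 0 ≤ w0) (hw1 : 0 ≤ w1) (hw2 : 0 ≤ w2) (hsw : w0 + w1 + w2 = 1) :
    e0 * w0 + e1 * w1 + e2 * w2 ≤ L := by
  have hx : L * w0 + L * w1 + L * w2 = L := by linear_combination L * hsw
  nlinarith [hx, mul_nonneg (sub_nonneg.2 h0) hw0, mul_nonneg (sub_nonneg.2 h1) hw1,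
    mul_nonneg (sub_nonneg.2 h2) hw2]

private theorem svb_msum (a0 a1 a2 b0 b1 b2 : ℝ) (h1 : a0^2+a1^2+a2^2 = 1)
    (h2 : b0^2+b1^2+b2^2 = 1) (h12 : a0*b0+a1*b1+a2*b2 = 0) :
    (a0*b1 - a1*b0)^2 + (a0*b2 - a2*b0)^2 + (a1*b2 - a2*b1)^2 = 1 := by
  linear_combination (b0^2+b1^2+b2^2) * h1 + h2 - (a0*b0+a1*b1+a2*b2) * h12

/-- for any real 3×3 matrix `T` and orthonormal pairs `c1, c2` and `b1, b2`,
`⟪c1, T b1⟫ + ⟪c2, T b2⟫ ≤ √λ1 + √λ2`, the sum of the two largest singular values of `T`. -/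
theorem singular_value_bound (T : Matrix (Fin 3) (Fin 3) ℝ)
    (l1 l2 l3 : ℝ) (h12 : l2 ≤ l1) (h23 : l3 ≤ l2)
    (hchar : (T * Tᵀ).charpoly = (X - C l1) * (X - C l2) * (X - C l3))
    (c1 c2 b1 b2 : EuclideanSpace ℝ (Fin 3))
    (hc1 : ‖c1‖ = 1) (hc2 : ‖c2‖ = 1) (hb1 : ‖b1‖ = 1) (hb2 : ‖b2‖ = 1)
    (hc : rip c1 c2 = 0) (hb : rip b1 b2 = 0) :
    rip c1 (matVec T b1) + rip c2 (matVec T b2) ≤ Real.sqrt l1 + Real.sqrt l2 := by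
  classical
  have normdot : ∀ x : EuclideanSpace ℝ (Fin 3), ‖x‖ = 1 → x ⬝ᵥ x = 1 := fun x hx => by
    have h := real_inner_self_eq_norm_sq x
    simp only [PiLp.inner_apply, RCLike.inner_apply, conj_trivial] at h
    simp [dotProduct, h, hx]
  have hdc1 : c1 ⬝ᵥ c1 = 1 := normdot c1 hc1
  have hdc2 : c2 ⬝ᵥ c2 = 1 := normdot c2 hc2
  have hdb1 : b1 ⬝ᵥ b1 = 1 := normdot b1 hb1
  have hdb2 : b2 ⬝ᵥ b2 = 1 := normdot b2 hb2
  have hdc : c1 ⬝ᵥ c2 = 0 := by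
    have := hc; simpa [rip, PiLp.inner_apply, dotProduct, mul_comm] using this
  have hdb : b1 ⬝ᵥ b2 = 0 := by
    have := hb; simpa [rip, PiLp.inner_apply, dotProduct, mul_comm] using this
  rw [show rip c1 (matVec T b1) = c1 ⬝ᵥ T *ᵥ b1 from by
        simp [rip, matVec, PiLp.inner_apply, dotProduct]; exact Finset.sum_congr rfl fun i _ => mul_comm _ _,
      show rip c2 (matVec T b2) = c2 ⬝ᵥ T *ᵥ b2 from by
        simp [rip, matVec, PiLp.inner_apply, dotProduct]; exact Finset.sum_congr rfl fun i _ => mul_comm _ _]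
  -- spectral decomposition of A = T * Tᵀ
  have hA : (T * Tᵀ).IsHermitian := by
    rw [show Tᵀ = Tᴴ by simp [conjTranspose_eq_transpose_of_trivial]]
    exact isHermitian_mul_conjTranspose_self T
  obtain ⟨U, μ, hU1, hU2, hsp, hμnn⟩ :
      ∃ (U : Matrix (Fin 3) (Fin 3) ℝ) (μ : Fin 3 → ℝ),
        Uᵀ * U = 1 ∧ U * Uᵀ = 1 ∧ T * Tᵀ = U * diagonal μ * Uᵀ ∧ ∀ i, 0 ≤ μ i := by
    refine ⟨(hA.eigenvectorUnitary : Matrix (Fin 3) (Fin 3) ℝ), hA.eigenvalues, ?_, ?_, ?_, ?_⟩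
    · have h := Matrix.mem_unitaryGroup_iff'.mp (hA.eigenvectorUnitary).2
      simpa [Matrix.star_eq_conjTranspose, conjTranspose_eq_transpose_of_trivial] using h
    · have h := Matrix.mem_unitaryGroup_iff.mp (hA.eigenvectorUnitary).2
      simpa [Matrix.star_eq_conjTranspose, conjTranspose_eq_transpose_of_trivial] using h
    · have h := hA.spectral_theorem
      simpa [Matrix.star_eq_conjTranspose, conjTranspose_eq_transpose_of_trivial] using h
    · intro i
      have hPSD : (T * Tᵀ).PosSemidef := by
        rw [show Tᵀ = Tᴴ by simp [conjTranspose_eq_transpose_of_trivial]]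
        exact posSemidef_self_mul_conjTranspose T
      exact hPSD.eigenvalues_nonneg i
  -- eigenvalue facts
  have hcpA : (T * Tᵀ).charpoly = (X - C (μ 0)) * (X - C (μ 1)) * (X - C (μ 2)) := by
    rw [hsp, svb_charpoly_conj _ _ hU2, svb_charpoly_diagonal, Fin.prod_univ_three]
  have Hpt : ∀ x : ℝ, (x - μ 0) * (x - μ 1) * (x - μ 2) = (x - l1) * (x - l2) * (x - l3) := by
    intro x
    have h := hcpA.symm.trans hchar
    have h2 := congrArg (eval x) h
    simpa using h2
  obtain ⟨hs1, hs2⟩ := svb_sym _ _ _ _ _ _ Hpt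
  have hmem : ∀ i : Fin 3, μ i = l1 ∨ μ i = l2 ∨ μ i = l3 := by
    intro i
    apply svb_mem
    rw [← Hpt (μ i)]
    fin_cases i <;> simp
  have hl3 : 0 ≤ l3 := by
    have h := Hpt l3
    simp only [sub_self, mul_zero] at h
    rcases svb_mem _ _ _ _ h with h' | h' | h' <;> rw [h'] <;> [exact hμnn 0; exact hμnn 1;
      exact hμnn 2]
  have hl2 : 0 ≤ l2 := le_trans hl3 h23
  have hl1 : 0 ≤ l1 := le_trans hl2 h12
  have hμl3 : ∀ i, l3 ≤ μ i := fun i => by rcases hmem i with h | h | h <;> rw [h] <;> linarith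
  have hpair01 : μ 0 * μ 1 ≤ l1 * l2 :=
    svb_pairbound (μ 2) (μ 0) (μ 1) l1 l2 l3 h12 h23 hl3 (hmem 2) (by linarith)
      (by linear_combination hs2)
  have hpair02 : μ 0 * μ 2 ≤ l1 * l2 :=
    svb_pairbound (μ 1) (μ 0) (μ 2) l1 l2 l3 h12 h23 hl3 (hmem 1) (by linarith)
      (by linear_combination hs2)
  have hpair12 : μ 1 * μ 2 ≤ l1 * l2 :=
    svb_pairbound (μ 0) (μ 1) (μ 2) l1 l2 l3 h12 h23 hl3 (hmem 0) (by linarith)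
      (by linear_combination hs2)
  -- transfer helpers
  have hmv : ∀ v b : Fin 3 → ℝ, v ⬝ᵥ T *ᵥ b = (Tᵀ *ᵥ v) ⬝ᵥ b := by
    intro v b
    rw [dotProduct_mulVec, ← transpose_transpose T, vecMul_transpose, transpose_transpose]
  have hw : ∀ v w : Fin 3 → ℝ, (Uᵀ *ᵥ v) ⬝ᵥ (Uᵀ *ᵥ w) = v ⬝ᵥ w := by
    intro v w
    rw [dotProduct_mulVec, vecMul_transpose, mulVec_mulVec, hU2, one_mulVec]
  have hTT : ∀ v w : Fin 3 → ℝ, (Tᵀ *ᵥ v) ⬝ᵥ (Tᵀ *ᵥ w) = v ⬝ᵥ (T * Tᵀ) *ᵥ w := by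
    intro v w
    rw [← mulVec_mulVec, hmv v (Tᵀ *ᵥ w)]
  have hqA : ∀ v w : Fin 3 → ℝ, v ⬝ᵥ (T * Tᵀ) *ᵥ w
      = ∑ i, μ i * ((Uᵀ *ᵥ v) i) * ((Uᵀ *ᵥ w) i) := by
    intro v w; rw [hsp]; exact svb_quadform U μ v w
  -- column facts
  have hcolnorm : ∀ i : Fin 3, (fun k => U k i) ⬝ᵥ (fun k => U k i) = 1 := by
    intro i
    have h := congrFun (congrFun hU1 i) i
    simpa [mul_apply, dotProduct, transpose_apply, one_apply] using h
  have hUc : ∀ (v : Fin 3 → ℝ) (i : Fin 3), (Uᵀ *ᵥ v) i = (fun k => U k i) ⬝ᵥ v := by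
    intro v i; simp [mulVec, dotProduct, transpose_apply]
  have hcol : ∀ i : Fin 3, ((Uᵀ *ᵥ c1) i) ^ 2 + ((Uᵀ *ᵥ c2) i) ^ 2 ≤ 1 := by
    intro i
    have h := svb_bessel (fun k => U k i) c1 c2 hdc1 hdc2 hdc
    rw [hcolnorm i] at h
    rw [hUc c1 i, hUc c2 i]
    exact h
  have hpars1 : ((Uᵀ *ᵥ c1) 0) ^ 2 + ((Uᵀ *ᵥ c1) 1) ^ 2 + ((Uᵀ *ᵥ c1) 2) ^ 2 = 1 := by
    have h := hw c1 c1
    rw [hdc1] at h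
    simp only [dotProduct, Fin.sum_univ_three] at h
    linear_combination h
  have hpars2 : ((Uᵀ *ᵥ c2) 0) ^ 2 + ((Uᵀ *ᵥ c2) 1) ^ 2 + ((Uᵀ *ᵥ c2) 2) ^ 2 = 1 := by
    have h := hw c2 c2
    rw [hdc2] at h
    simp only [dotProduct, Fin.sum_univ_three] at h
    linear_combination h
  have hcross0 : ((Uᵀ *ᵥ c1) 0) * ((Uᵀ *ᵥ c2) 0) + ((Uᵀ *ᵥ c1) 1) * ((Uᵀ *ᵥ c2) 1)
      + ((Uᵀ *ᵥ c1) 2) * ((Uᵀ *ᵥ c2) 2) = 0 := by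
    have h := hw c1 c2
    rw [hdc] at h
    simp only [dotProduct, Fin.sum_univ_three] at h
    linear_combination h
  have hq11 := hqA c1 c1
  have hq22 := hqA c2 c2
  have hq12 := hqA c1 c2
  simp only [Fin.sum_univ_three] at hq11 hq22 hq12
  have habel := svb_abel (μ 0) (μ 1) (μ 2)
      (((Uᵀ *ᵥ c1) 0) ^ 2 + ((Uᵀ *ᵥ c2) 0) ^ 2)
      (((Uᵀ *ᵥ c1) 1) ^ 2 + ((Uᵀ *ᵥ c2) 1) ^ 2)
      (((Uᵀ *ᵥ c1) 2) ^ 2 + ((Uᵀ *ᵥ c2) 2) ^ 2) l1 l2 l3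
      (hμl3 0) (hμl3 1) (hμl3 2) (by positivity) (hcol 0) (by positivity) (hcol 1)
      (by positivity) (hcol 2) (by linarith) hs1
  have hmsum := svb_msum ((Uᵀ *ᵥ c1) 0) ((Uᵀ *ᵥ c1) 1) ((Uᵀ *ᵥ c1) 2)
    ((Uᵀ *ᵥ c2) 0) ((Uᵀ *ᵥ c2) 1) ((Uᵀ *ᵥ c2) 2) hpars1 hpars2 hcross0
  have hb' := svb_binet (μ 0) (μ 1) (μ 2) ((Uᵀ *ᵥ c1) 0) ((Uᵀ *ᵥ c1) 1) ((Uᵀ *ᵥ c1) 2)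
    ((Uᵀ *ᵥ c2) 0) ((Uᵀ *ᵥ c2) 1) ((Uᵀ *ᵥ c2) 2)
  set x0 := (Uᵀ *ᵥ c1) 0 with hx0
  set x1 := (Uᵀ *ᵥ c1) 1 with hx1
  set x2 := (Uᵀ *ᵥ c1) 2 with hx2
  set y0 := (Uᵀ *ᵥ c2) 0 with hy0
  set y1 := (Uᵀ *ᵥ c2) 1 with hy1
  set y2 := (Uᵀ *ᵥ c2) 2 with hy2
  set g11 := c1 ⬝ᵥ T *ᵥ b1 with hg11
  set g12 := c1 ⬝ᵥ T *ᵥ b2 with hg12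
  set g21 := c2 ⬝ᵥ T *ᵥ b1 with hg21
  set g22 := c2 ⬝ᵥ T *ᵥ b2 with hg22
  set Q11 := c1 ⬝ᵥ (T * Tᵀ) *ᵥ c1 with hQ11
  set Q22 := c2 ⬝ᵥ (T * Tᵀ) *ᵥ c2 with hQ22
  set Q12 := c1 ⬝ᵥ (T * Tᵀ) *ᵥ c2 with hQ12
  clear_value x0 x1 x2 y0 y1 y2 g11 g12 g21 g22 Q11 Q22 Q12
  -- Frobenius bound
  have hFa : g11 ^ 2 + g12 ^ 2 ≤ Q11 := by
    rw [hQ11, hg11, hg12, hmv c1 b1, hmv c1 b2, ← hTT c1 c1]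
    exact svb_bessel (Tᵀ *ᵥ c1) b1 b2 hdb1 hdb2 hdb
  have hFb : g21 ^ 2 + g22 ^ 2 ≤ Q22 := by
    rw [hQ22, hg21, hg22, hmv c2 b1, hmv c2 b2, ← hTT c2 c2]
    exact svb_bessel (Tᵀ *ᵥ c2) b1 b2 hdb1 hdb2 hdb
  have hF : g11 ^ 2 + g12 ^ 2 + g21 ^ 2 + g22 ^ 2 ≤ l1 + l2 := by
    nlinarith only [hFa, hFb, habel, hq11, hq22]
  -- determinant bound
  have hdet2 : (g11 * g22 - g12 * g21) ^ 2 ≤ l1 * l2 := by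
    have hd : g11 * g22 - g12 * g21
        = cross3 (Tᵀ *ᵥ c1) (Tᵀ *ᵥ c2) ⬝ᵥ cross3 b1 b2 := by
      rw [hg11, hg12, hg21, hg22, hmv c1 b1, hmv c1 b2, hmv c2 b1, hmv c2 b2]
      exact svb_binetcauchy _ _ _ _
    have hnb : cross3 b1 b2 ⬝ᵥ cross3 b1 b2 = 1 := by
      rw [svb_lagrange, hdb1, hdb2, hdb]; norm_num
    have hzz : cross3 (Tᵀ *ᵥ c1) (Tᵀ *ᵥ c2) ⬝ᵥ cross3 (Tᵀ *ᵥ c1) (Tᵀ *ᵥ c2)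
        = Q11 * Q22 - Q12 ^ 2 := by
      rw [hQ11, hQ22, hQ12, svb_lagrange, hTT c1 c1, hTT c2 c2, hTT c1 c2]
    have hsel := svb_sel (μ 0 * μ 1) (μ 0 * μ 2) (μ 1 * μ 2)
      ((x0 * y1 - x1 * y0) ^ 2) ((x0 * y2 - x2 * y0) ^ 2) ((x1 * y2 - x2 * y1) ^ 2)
      (l1 * l2) hpair01 hpair02 hpair12 (sq_nonneg _) (sq_nonneg _) (sq_nonneg _) hmsum
    calc (g11 * g22 - g12 * g21) ^ 2
        = (cross3 (Tᵀ *ᵥ c1) (Tᵀ *ᵥ c2) ⬝ᵥ cross3 b1 b2) ^ 2 := by rw [hd]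
      _ ≤ (cross3 (Tᵀ *ᵥ c1) (Tᵀ *ᵥ c2) ⬝ᵥ cross3 (Tᵀ *ᵥ c1) (Tᵀ *ᵥ c2))
            * (cross3 b1 b2 ⬝ᵥ cross3 b1 b2) := svb_cs _ _
      _ = Q11 * Q22 - Q12 ^ 2 := by rw [hnb, mul_one, hzz]
      _ ≤ l1 * l2 := by rw [hq11, hq22, hq12]; nlinarith only [hb', hsel, hq11, hq22, hq12]
  -- final assembly
  have habs : |g11 * g22 - g12 * g21| ≤ Real.sqrt (l1 * l2) := by
    rw [← Real.sqrt_sq_eq_abs]; exact Real.sqrt_le_sqrt hdet2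
  have hsq1 : Real.sqrt l1 ^ 2 = l1 := Real.sq_sqrt hl1
  have hsq2 : Real.sqrt l2 ^ 2 = l2 := Real.sq_sqrt hl2
  have hsqm : Real.sqrt (l1 * l2) = Real.sqrt l1 * Real.sqrt l2 := Real.sqrt_mul hl1 l2
  have hkey : (g11 + g22) ^ 2 ≤ (Real.sqrt l1 + Real.sqrt l2) ^ 2 := by
    nlinarith only [hF, habs, le_abs_self (g11 * g22 - g12 * g21), sq_nonneg (g12 - g21), hsq1, hsq2, hsqm, hl1, hl2, Real.sqrt_nonneg l1, Real.sqrt_nonneg l2]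
  calc g11 + g22 ≤ |g11 + g22| := le_abs_self _
    _ = Real.sqrt ((g11 + g22) ^ 2) := (Real.sqrt_sq_eq_abs _).symm
    _ ≤ Real.sqrt ((Real.sqrt l1 + Real.sqrt l2) ^ 2) := Real.sqrt_le_sqrt hkey
    _ = Real.sqrt l1 + Real.sqrt l2 := Real.sqrt_sq (by positivity)

end
end

section
/- Let ν1, ν2 ∈ ℝ and β, γ1, γ2 ∈ EuclideanSpace ℝ (Fin 3), and for a ∈ {0,1} (a = 0 for outcome '+', a = 1 for outcome '−') and m ∈ {1,2} define the 2×2 complex matrix ρ(a,m) := (1/4)·((1 + (−1)^a·ν_m)·I + β·σ + (−1)^a·(γ_m·σ)). If each ρ(a,m) is positive semidefinite and the family (ρ(a,m)) admits a finite LHS model, then ‖γ1+γ2‖ + ‖γ1−γ2‖ ≤ 2. -/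
open Matrix Polynomial
open scoped Kronecker Matrix ComplexOrder

noncomputable section

def blochV (M : Matrix (Fin 2) (Fin 2) ℂ) : EuclideanSpace ℝ (Fin 3) :=
  (WithLp.equiv 2 _).symm
    ![(M 0 1).re + (M 1 0).re, (M 1 0).im - (M 0 1).im, (M 0 0).re - (M 1 1).re]

lemma blochV_norm_le (M : Matrix (Fin 2) (Fin 2) ℂ) (h : M.PosSemidef) :
    ‖blochV M‖ ≤ (M 0 0).re + (M 1 1).re := by
  obtain ⟨hherm, hform⟩ := h
  set a := (M 0 0).re with ha'
  set d := (M 1 1).re with hd'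
  set c := M 0 1 with hc'
  have h10 : M 1 0 = starRingEnd ℂ c := by
    have := congrFun (congrFun hherm 1) 0
    simpa [Matrix.conjTranspose_apply] using this.symm
  have h00 : M 0 0 = (a : ℂ) := by
    have := congrFun (congrFun hherm 0) 0
    simp [Matrix.conjTranspose_apply] at this
    exact (Complex.conj_eq_iff_re.mp this).symm
  have h11 : M 1 1 = (d : ℂ) := by
    have := congrFun (congrFun hherm 1) 1
    simp [Matrix.conjTranspose_apply] at this
    exact (Complex.conj_eq_iff_re.mp this).symm
  set K := Complex.normSq c with hK'
  have hKnn : 0 ≤ K := Complex.normSq_nonneg c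
  have hKeq : K = c.re * c.re + c.im * c.im := Complex.normSq_apply c
  -- quadratic form evaluations
  have form : ∀ x : Fin 2 → ℂ,
      0 ≤ ((starRingEnd ℂ (x 0)) * (M 0 0 * x 0 + M 0 1 * x 1)
          + (starRingEnd ℂ (x 1)) * (M 1 0 * x 0 + M 1 1 * x 1)).re := by
    intro x
    have := Matrix.PosSemidef.dotProduct_mulVec_nonneg ⟨hherm, hform⟩ x
    rw [Complex.nonneg_iff] at this
    simpa [dotProduct, Matrix.mulVec, Fin.sum_univ_two] using this.1
  have ha : 0 ≤ a := by
    have := form ![1, 0]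
    simp [h00] at this
    simpa using this
  have hd : 0 ≤ d := by
    have := form ![0, 1]
    simp [h11] at this
    simpa using this
  have q1 : 0 ≤ a * d ^ 2 - d * K := by
    have := form ![(-d : ℂ), starRingEnd ℂ c]
    rw [h00, h10, h11] at this
    simp [Complex.normSq_apply, Complex.mul_re, Complex.add_re, Complex.mul_im] at this
    simp only [← hc'] at this
    nlinarith [this, hKeq]
  have q2 : 0 ≤ a ^ 2 * d - a * K := by
    have := form ![c, (-a : ℂ)]
    rw [h00, h10, h11] at this
    simp [Complex.normSq_apply, Complex.mul_re, Complex.add_re, Complex.mul_im] at this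
    simp only [← hc'] at this
    nlinarith [this, hKeq]
  have q3 : 0 ≤ a - 2 * K + d * K := by
    have := form ![(-1 : ℂ), starRingEnd ℂ c]
    rw [h00, h10, h11] at this
    simp [Complex.normSq_apply, Complex.mul_re, Complex.add_re, Complex.mul_im] at this
    simp only [← hc'] at this
    nlinarith [this, hKeq]
  have hKad : K ≤ a * d := by
    rcases lt_or_eq_of_le (by linarith : (0:ℝ) ≤ a + d) with hpos | hzero
    · have hX : 0 ≤ (a * d - K) * (a + d) := by nlinarith [q1, q2]
      nlinarith [hX, hpos]
    · have ha0 : a = 0 := by linarith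
      have hd0 : d = 0 := by linarith
      rw [ha0, hd0] at q3 ⊢
      linarith
  -- now the norm bound
  have hnormsq : ‖blochV M‖ ≤ Real.sqrt ((a + d) ^ 2) := by
    rw [EuclideanSpace.norm_eq]
    apply Real.sqrt_le_sqrt
    rw [Fin.sum_univ_three]
    simp only [blochV, WithLp.equiv_symm_apply, PiLp.toLp_apply, Real.norm_eq_abs, sq_abs]
    rw [h10, h00, h11]
    simp [Complex.normSq_apply] at hKad ⊢
    simp only [← hc']
    nlinarith [hKad, hKeq]
  calc ‖blochV M‖ ≤ Real.sqrt ((a + d) ^ 2) := hnormsq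
    _ = a + d := by rw [Real.sqrt_sq (by linarith)]

/-- if the assemblage `ρ(a,m) = (1/4)((1 + (−1)^a ν_m) I + β·σ + (−1)^a γ_m·σ)`
consists of positive semidefinite matrices and admits a finite LHS model, then
`‖γ1+γ2‖ + ‖γ1−γ2‖ ≤ 2`. -/
theorem lhs_model_necessary (ν : Fin 2 → ℝ) (β : EuclideanSpace ℝ (Fin 3))
    (γ : Fin 2 → EuclideanSpace ℝ (Fin 3))
    (P : Fin 2 → Fin 2 → Matrix (Fin 2) (Fin 2) ℂ)
    (hdef : ∀ a m, P a m = (1/4 : ℝ) •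
      ((1 + (-1 : ℝ) ^ (a : ℕ) * ν m) • (1 : Matrix (Fin 2) (Fin 2) ℂ)
        + pauliVec β + ((-1 : ℝ) ^ (a : ℕ)) • pauliVec (γ m)))
    (hpos : ∀ a m, (P a m).PosSemidef)
    (hlhs : HasLHSModel P) :
    ‖γ 0 + γ 1‖ + ‖γ 0 - γ 1‖ ≤ 2 := by
  obtain ⟨N, τ, q, hτpsd, hq01, hqsum, hPmod⟩ := hlhs
  -- real-part linearity of entries of the model
  have hre : ∀ (a m : Fin 2) (i j : Fin 2),
      ((P a m) i j).re = ∑ lam, q a m lam * ((τ lam) i j).re := by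
    intro a m i j
    rw [hPmod a m]
    rw [Matrix.sum_apply]
    rw [Complex.re_sum]
    exact Finset.sum_congr rfl fun lam _ => by
      simp [Matrix.smul_apply, Complex.smul_re]
  have him : ∀ (a m : Fin 2) (i j : Fin 2),
      ((P a m) i j).im = ∑ lam, q a m lam * ((τ lam) i j).im := by
    intro a m i j
    rw [hPmod a m]
    rw [Matrix.sum_apply]
    rw [Complex.im_sum]
    exact Finset.sum_congr rfl fun lam _ => by
      simp [Matrix.smul_apply, Complex.smul_im]
  -- concrete entries of P from hdef
  have h1 : ∀ a m : Fin 2, ((P a m 0 1).re + (P a m 1 0).re)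
      = (1/2) * (β 0 + (-1:ℝ)^(a:ℕ) * γ m 0) := by
    intro a m
    rw [hdef a m]
    simp [pauliVec, σ₁, σ₂, σ₃, Matrix.add_apply, Matrix.smul_apply, Matrix.one_apply,
      Complex.add_re, Complex.smul_re, ← Complex.ofReal_pow, ← Complex.ofReal_neg,
      ← Complex.ofReal_one, Complex.ofReal_re]
    ring
  have h2 : ∀ a m : Fin 2, ((P a m 1 0).im - (P a m 0 1).im)
      = (1/2) * (β 1 + (-1:ℝ)^(a:ℕ) * γ m 1) := by
    intro a m
    rw [hdef a m]
    simp [pauliVec, σ₁, σ₂, σ₃, Matrix.add_apply, Matrix.smul_apply, Matrix.one_apply,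
      Complex.add_im, Complex.smul_im, ← Complex.ofReal_pow, ← Complex.ofReal_neg,
      ← Complex.ofReal_one, Complex.ofReal_im]
    ring
  have h3 : ∀ a m : Fin 2, ((P a m 0 0).re - (P a m 1 1).re)
      = (1/2) * (β 2 + (-1:ℝ)^(a:ℕ) * γ m 2) := by
    intro a m
    rw [hdef a m]
    simp [pauliVec, σ₁, σ₂, σ₃, Matrix.add_apply, Matrix.smul_apply, Matrix.one_apply,
      Complex.add_re, Complex.smul_re, ← Complex.ofReal_pow, ← Complex.ofReal_neg,
      ← Complex.ofReal_one, Complex.ofReal_re]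
    ring
  have h4 : ∀ a m : Fin 2, ((P a m 0 0).re + (P a m 1 1).re)
      = (1/2) * (1 + (-1:ℝ)^(a:ℕ) * ν m) := by
    intro a m
    rw [hdef a m]
    simp [pauliVec, σ₁, σ₂, σ₃, Matrix.add_apply, Matrix.smul_apply, Matrix.one_apply,
      Complex.add_re, Complex.smul_re, ← Complex.ofReal_pow, ← Complex.ofReal_neg,
      ← Complex.ofReal_one, Complex.ofReal_re]
    ring
  set t : Fin N → ℝ := fun lam => ((τ lam) 0 0).re + ((τ lam) 1 1).re with ht'
  set e : Fin 2 → Fin N → ℝ := fun m lam => q 0 m lam - q 1 m lam with he'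
  -- sum of traces is 1
  have htsum : ∑ lam, t lam = 1 := by
    have e0 := h4 0 0
    have e1 := h4 1 0
    rw [hre 0 0 0 0, hre 0 0 1 1] at e0
    rw [hre 1 0 0 0, hre 1 0 1 1] at e1
    have : ∑ lam, q 0 0 lam * ((τ lam) 0 0).re + ∑ lam, q 0 0 lam * ((τ lam) 1 1).re
        + (∑ lam, q 1 0 lam * ((τ lam) 0 0).re + ∑ lam, q 1 0 lam * ((τ lam) 1 1).re)
        = 1 := by
      rw [e0, e1]; simp; ring
    rw [← this]
    rw [← Finset.sum_add_distrib, ← Finset.sum_add_distrib, ← Finset.sum_add_distrib]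
    exact Finset.sum_congr rfl fun lam _ => by
      have := hqsum 0 lam
      simp only [ht']
      linear_combination (-(τ lam 0 0).re - (τ lam 1 1).re) * this
  -- gamma decomposition
  have hrhs : ∀ (m : Fin 2) (k : Fin 3), (∑ lam, e m lam • blochV (τ lam)) k
      = ∑ lam, e m lam * (blochV (τ lam)) k := by
    intro m k
    rw [WithLp.ofLp_sum, Finset.sum_apply]
    exact Finset.sum_congr rfl fun lam _ => rfl
  have hγ : ∀ m : Fin 2, γ m = ∑ lam, e m lam • blochV (τ lam) := by
    intro m
    ext i
    fin_cases i
    · show γ m 0 = (∑ lam, e m lam • blochV (τ lam)) 0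
      rw [hrhs m 0]
      have e0 := h1 0 m
      have e1 := h1 1 m
      rw [hre 0 m 0 1, hre 0 m 1 0] at e0
      rw [hre 1 m 0 1, hre 1 m 1 0] at e1
      have key : ∑ lam, e m lam * (blochV (τ lam)) 0
          = (∑ lam, q 0 m lam * ((τ lam) 0 1).re + ∑ lam, q 0 m lam * ((τ lam) 1 0).re)
          - (∑ lam, q 1 m lam * ((τ lam) 0 1).re + ∑ lam, q 1 m lam * ((τ lam) 1 0).re) := by
        rw [← Finset.sum_add_distrib, ← Finset.sum_add_distrib, ← Finset.sum_sub_distrib]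
        exact Finset.sum_congr rfl fun lam _ => by
          simp [he', blochV, WithLp.equiv_symm_apply, PiLp.toLp_apply]; ring
      rw [key, e0, e1]; norm_num; ring
    · show γ m 1 = (∑ lam, e m lam • blochV (τ lam)) 1
      rw [hrhs m 1]
      have e0 := h2 0 m
      have e1 := h2 1 m
      rw [him 0 m 1 0, him 0 m 0 1] at e0
      rw [him 1 m 1 0, him 1 m 0 1] at e1
      have key : ∑ lam, e m lam * (blochV (τ lam)) 1
          = (∑ lam, q 0 m lam * ((τ lam) 1 0).im - ∑ lam, q 0 m lam * ((τ lam) 0 1).im)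
          - (∑ lam, q 1 m lam * ((τ lam) 1 0).im - ∑ lam, q 1 m lam * ((τ lam) 0 1).im) := by
        rw [← Finset.sum_sub_distrib, ← Finset.sum_sub_distrib, ← Finset.sum_sub_distrib]
        exact Finset.sum_congr rfl fun lam _ => by
          simp [he', blochV, WithLp.equiv_symm_apply, PiLp.toLp_apply]; ring
      rw [key, e0, e1]; norm_num; ring
    · show γ m 2 = (∑ lam, e m lam • blochV (τ lam)) 2
      rw [hrhs m 2]
      have e0 := h3 0 m
      have e1 := h3 1 m
      rw [hre 0 m 0 0, hre 0 m 1 1] at e0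
      rw [hre 1 m 0 0, hre 1 m 1 1] at e1
      have key : ∑ lam, e m lam * (blochV (τ lam)) 2
          = (∑ lam, q 0 m lam * ((τ lam) 0 0).re - ∑ lam, q 0 m lam * ((τ lam) 1 1).re)
          - (∑ lam, q 1 m lam * ((τ lam) 0 0).re - ∑ lam, q 1 m lam * ((τ lam) 1 1).re) := by
        rw [← Finset.sum_sub_distrib, ← Finset.sum_sub_distrib, ← Finset.sum_sub_distrib]
        exact Finset.sum_congr rfl fun lam _ => by
          simp [he', blochV, WithLp.equiv_symm_apply, PiLp.toLp_apply]; ring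
      rw [key, e0, e1]; norm_num; ring
  -- norm bounds
  have hb : ∀ lam, ‖blochV (τ lam)‖ ≤ t lam := fun lam => blochV_norm_le _ (hτpsd lam)
  have ht0 : ∀ lam, 0 ≤ t lam := fun lam => le_trans (norm_nonneg _) (hb lam)
  have hee : ∀ m lam, |e m lam| ≤ 1 := by
    intro m lam
    rw [abs_le]
    have a0 := hq01 0 m lam
    have a1 := hq01 1 m lam
    constructor <;> simp only [he'] <;> linarith
  -- assemble
  have hsum1 : γ 0 + γ 1 = ∑ lam, (e 0 lam + e 1 lam) • blochV (τ lam) := by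
    rw [hγ 0, hγ 1, ← Finset.sum_add_distrib]
    exact Finset.sum_congr rfl fun lam _ => by module
  have hsum2 : γ 0 - γ 1 = ∑ lam, (e 0 lam - e 1 lam) • blochV (τ lam) := by
    rw [hγ 0, hγ 1, ← Finset.sum_sub_distrib]
    exact Finset.sum_congr rfl fun lam _ => by module
  have hn1 : ‖γ 0 + γ 1‖ ≤ ∑ lam, |e 0 lam + e 1 lam| * t lam := by
    rw [hsum1]
    refine le_trans (norm_sum_le _ _) (Finset.sum_le_sum fun lam _ => ?_)
    rw [norm_smul, Real.norm_eq_abs]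
    exact mul_le_mul_of_nonneg_left (hb lam) (abs_nonneg _)
  have hn2 : ‖γ 0 - γ 1‖ ≤ ∑ lam, |e 0 lam - e 1 lam| * t lam := by
    rw [hsum2]
    refine le_trans (norm_sum_le _ _) (Finset.sum_le_sum fun lam _ => ?_)
    rw [norm_smul, Real.norm_eq_abs]
    exact mul_le_mul_of_nonneg_left (hb lam) (abs_nonneg _)
  have hfinal : ∑ lam, |e 0 lam + e 1 lam| * t lam + ∑ lam, |e 0 lam - e 1 lam| * t lam
      ≤ 2 := by
    rw [← Finset.sum_add_distrib]
    calc ∑ lam, (|e 0 lam + e 1 lam| * t lam + |e 0 lam - e 1 lam| * t lam)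
        ≤ ∑ lam, 2 * t lam := by
          refine Finset.sum_le_sum fun lam _ => ?_
          have h01 := hee 0 lam
          have h11 := hee 1 lam
          have habs : |e 0 lam + e 1 lam| + |e 0 lam - e 1 lam| ≤ 2 := by
            rcases abs_cases (e 0 lam + e 1 lam) with ⟨hp, _⟩ | ⟨hp, _⟩ <;>
            rcases abs_cases (e 0 lam - e 1 lam) with ⟨hq, _⟩ | ⟨hq, _⟩ <;>
            rw [hp, hq] <;>
            rcases abs_le.mp h01 with ⟨u1, u2⟩ <;>
            rcases abs_le.mp h11 with ⟨v1, v2⟩ <;> linarith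
          nlinarith [ht0 lam, habs]
      _ = 2 := by rw [← Finset.mul_sum, htsum]; ring
  linarith

end
end

section
/- Let γ1, γ2 ∈ EuclideanSpace ℝ (Fin 3) satisfy ‖γ1+γ2‖ + ‖γ1−γ2‖ ≤ 2, and for a ∈ {0,1} and m ∈ {1,2} define the 2×2 complex matrix ρ(a,m) := (1/4)·(I + (−1)^a·(γ_m·σ)). Then the family (ρ(a,m)) admits a finite LHS model; indeed there exist positive semidefinite 2×2 matrices σ(λ) indexed by the four functions λ : Fin 2 → Fin 2 such that ρ(a,m) = Σ_{λ with λ(m) = a} σ(λ) for all a, m. -/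
open Matrix Polynomial
open scoped Kronecker Matrix ComplexOrder

noncomputable section

lemma aux_final (S C : ℝ) (hS : 0 ≤ S) (h : 4 * C ^ 2 ≤ S ^ 2) : 0 ≤ S + 2 * C := by
  nlinarith [sq_nonneg (S + 2 * C)]

lemma quad_nonneg (t v0 v1 v2 ar ai br bi : ℝ)
    (hsq : v0 ^ 2 + v1 ^ 2 + v2 ^ 2 ≤ t ^ 2) (ht : 0 ≤ t) :
    0 ≤ (t + v2) * (ar ^ 2 + ai ^ 2) + (t - v2) * (br ^ 2 + bi ^ 2) +
      2 * (v0 * (ar * br + ai * bi) + v1 * (ar * bi - ai * br)) := by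
  set A := ar ^ 2 + ai ^ 2 with hAdef
  set B := br ^ 2 + bi ^ 2 with hBdef
  set p := ar * br + ai * bi with hpdef
  set q := ar * bi - ai * br with hqdef
  have hA : 0 ≤ A := by positivity
  have hB : 0 ≤ B := by positivity
  have hAB : 0 ≤ A * B := mul_nonneg hA hB
  have hLag : p ^ 2 + q ^ 2 = A * B := by rw [hAdef, hBdef, hpdef, hqdef]; ring
  have hv2 : v2 ^ 2 ≤ t ^ 2 := by nlinarith [sq_nonneg v0, sq_nonneg v1]
  have h4 : 0 ≤ t + v2 := by nlinarith [sq_nonneg (t + v2)]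
  have h5 : 0 ≤ t - v2 := by nlinarith [sq_nonneg (t - v2)]
  have h1 : (v0 * p + v1 * q) ^ 2 ≤ (v0 ^ 2 + v1 ^ 2) * (A * B) := by
    nlinarith [sq_nonneg (v0 * q - v1 * p)]
  have h2 : (v0 ^ 2 + v1 ^ 2) * (A * B) ≤ (t ^ 2 - v2 ^ 2) * (A * B) :=
    mul_le_mul_of_nonneg_right (by nlinarith [sq_nonneg v2]) hAB
  set S := (t + v2) * A + (t - v2) * B with hSdef
  have h3 : 4 * ((t ^ 2 - v2 ^ 2) * (A * B)) ≤ S ^ 2 := by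
    rw [hSdef]; nlinarith [sq_nonneg ((t + v2) * A - (t - v2) * B)]
  have hS : 0 ≤ S := by rw [hSdef]; positivity
  have hC2 : 4 * (v0 * p + v1 * q) ^ 2 ≤ S ^ 2 := by linarith
  exact aux_final S (v0 * p + v1 * q) hS hC2

def mk (t : ℝ) (v : EuclideanSpace ℝ (Fin 3)) : Matrix (Fin 2) (Fin 2) ℂ :=
  !![(t + v 2 : ℝ), (v 0 : ℝ) - (v 1 : ℝ) * Complex.I;
     (v 0 : ℝ) + (v 1 : ℝ) * Complex.I, (t - v 2 : ℝ)]

lemma mk_psd {t : ℝ} {v : EuclideanSpace ℝ (Fin 3)} (h : ‖v‖ ≤ t) : (mk t v).PosSemidef := by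
  have h0 : (0:ℝ) ≤ ‖v‖ := norm_nonneg v
  have ht : 0 ≤ t := le_trans h0 h
  have hsq : v 0 ^ 2 + v 1 ^ 2 + v 2 ^ 2 ≤ t ^ 2 := by
    have : ‖v‖ ^ 2 ≤ t ^ 2 := by nlinarith
    rwa [EuclideanSpace.norm_eq, Real.sq_sqrt (by positivity), Fin.sum_univ_three,
      Real.norm_eq_abs, Real.norm_eq_abs, Real.norm_eq_abs, sq_abs, sq_abs, sq_abs] at this
  rw [Matrix.posSemidef_iff_dotProduct_mulVec]
  constructor
  · ext i j
    fin_cases i <;> fin_cases j <;>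
      simp [mk, Matrix.conjTranspose_apply, Complex.ext_iff]
  · intro x
    rw [Complex.le_def]
    constructor
    · simp only [mk, dotProduct, Matrix.mulVec, Fin.sum_univ_two, Matrix.cons_val', Matrix.cons_val_zero, Matrix.cons_val_one, Matrix.head_cons, Matrix.head_fin_const, Pi.star_apply, Matrix.cons_val_fin_one, Matrix.empty_val', RCLike.star_def, Matrix.of_apply]
      simp only [Complex.add_re, Complex.mul_re, Complex.mul_im, Complex.sub_re, Complex.sub_im, Complex.add_im, Complex.ofReal_re, Complex.ofReal_im, Complex.conj_re, Complex.conj_im, Complex.I_re, Complex.I_im, Complex.zero_re]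
      linarith [quad_nonneg t (v 0) (v 1) (v 2) (x 0).re (x 0).im (x 1).re (x 1).im hsq ht]
    · simp only [mk, dotProduct, Matrix.mulVec, Fin.sum_univ_two, Matrix.cons_val', Matrix.cons_val_zero, Matrix.cons_val_one, Matrix.head_cons, Matrix.head_fin_const, Pi.star_apply, Matrix.cons_val_fin_one, Matrix.empty_val', RCLike.star_def, Matrix.of_apply]
      simp only [Complex.add_re, Complex.mul_re, Complex.mul_im, Complex.sub_re, Complex.sub_im, Complex.add_im, Complex.ofReal_re, Complex.ofReal_im, Complex.conj_re, Complex.conj_im, Complex.I_re, Complex.I_im, Complex.zero_im]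
      ring

set_option maxHeartbeats 1000000 in
/-- if `‖γ1+γ2‖ + ‖γ1−γ2‖ ≤ 2`, then the assemblage
`ρ(a,m) = (1/4)(I + (−1)^a γ_m·σ)` admits a finite LHS model; indeed there are positive
semidefinite matrices `τ(λ)` indexed by `λ : Fin 2 → Fin 2` with
`ρ(a,m) = Σ_{λ(m) = a} τ(λ)`. -/
theorem lhs_model_sufficient (γ : Fin 2 → EuclideanSpace ℝ (Fin 3))
    (hγ : ‖γ 0 + γ 1‖ + ‖γ 0 - γ 1‖ ≤ 2)
    (P : Fin 2 → Fin 2 → Matrix (Fin 2) (Fin 2) ℂ)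
    (hdef : ∀ a m, P a m = (1/4 : ℝ) •
      ((1 : Matrix (Fin 2) (Fin 2) ℂ) + ((-1 : ℝ) ^ (a : ℕ)) • pauliVec (γ m))) :
    HasLHSModel P ∧
    ∃ τ : (Fin 2 → Fin 2) → Matrix (Fin 2) (Fin 2) ℂ,
      (∀ lam, (τ lam).PosSemidef) ∧
      ∀ a m, P a m = ∑ lam ∈ Finset.univ.filter (fun lam : Fin 2 → Fin 2 => lam m = a),
        τ lam := by
  set α := ‖γ 0 + γ 1‖ with hα
  set β := ‖γ 0 - γ 1‖ with hβ
  have hα0 : 0 ≤ α := norm_nonneg _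
  have hβ0 : 0 ≤ β := norm_nonneg _
  set τ : (Fin 2 → Fin 2) → Matrix (Fin 2) (Fin 2) ℂ := fun lam =>
    if lam 0 = lam 1 then
      mk ((2 + α - β) / 16) ((((-1 : ℝ) ^ (lam 0 : ℕ)) / 8) • (γ 0 + γ 1))
    else
      mk ((2 + β - α) / 16) ((((-1 : ℝ) ^ (lam 0 : ℕ)) / 8) • (γ 0 - γ 1)) with hτ
  have habs : ∀ k : ℕ, |((-1 : ℝ) ^ k) / 8| = 1 / 8 := by
    intro k
    rw [abs_div, abs_pow, abs_neg, abs_one, one_pow]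
    norm_num
  have hpsd : ∀ lam, (τ lam).PosSemidef := by
    intro lam
    rw [hτ]
    dsimp only
    split_ifs with hc
    · refine mk_psd ?_
      rw [norm_smul, Real.norm_eq_abs, habs, ← hα]
      linarith
    · refine mk_psd ?_
      rw [norm_smul, Real.norm_eq_abs, habs, ← hβ]
      linarith
  have hsum : ∀ f : (Fin 2 → Fin 2) → Matrix (Fin 2) (Fin 2) ℂ,
      ∑ lam, f lam = f ![0, 0] + f ![0, 1] + f ![1, 0] + f ![1, 1] := by
    intro f
    rw [← Equiv.sum_comp (piFinTwoEquiv fun _ => Fin 2).symm f]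
    rw [Fintype.sum_prod_type]
    simp only [Fin.sum_univ_two, piFinTwoEquiv_symm_apply]
    abel
  have hτ00 : τ ![0, 0] = mk ((2 + α - β) / 16) ((1 / 8 : ℝ) • (γ 0 + γ 1)) := by
    rw [hτ]; norm_num
  have hτ01 : τ ![0, 1] = mk ((2 + β - α) / 16) ((1 / 8 : ℝ) • (γ 0 - γ 1)) := by
    rw [hτ]; norm_num
  have hτ10 : τ ![1, 0] = mk ((2 + β - α) / 16) ((-(1 / 8) : ℝ) • (γ 0 - γ 1)) := by
    rw [hτ]; norm_num
  have hτ11 : τ ![1, 1] = mk ((2 + α - β) / 16) ((-(1 / 8) : ℝ) • (γ 0 + γ 1)) := by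
    rw [hτ]; norm_num
  have hkey : ∀ a m, P a m =
      ∑ lam ∈ Finset.univ.filter (fun lam : Fin 2 → Fin 2 => lam m = a), τ lam := by
    intro a m
    rw [Finset.sum_filter, hsum, hdef]
    fin_cases a <;> fin_cases m <;>
      · norm_num
        ext i j
        fin_cases i <;> fin_cases j <;>
          · simp [hτ00, hτ01, hτ10, hτ11, mk, pauliVec, σ₁, σ₂, σ₃, Matrix.one_apply, PiLp.add_apply,
              PiLp.sub_apply, PiLp.smul_apply, smul_eq_mul, Complex.real_smul]
            push_cast
            ring
  refine ⟨?_, τ, hpsd, hkey⟩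
  refine ⟨2 ^ 2, fun k => τ (finFunctionFinEquiv.symm k),
    fun a m k => if (finFunctionFinEquiv.symm k) m = a then 1 else 0, fun k => hpsd _,
    ?_, ?_, ?_⟩
  · intro a m k
    dsimp only
    split_ifs <;> norm_num
  · intro m k
    dsimp only
    by_cases h : (finFunctionFinEquiv.symm k) m = 0
    · rw [if_pos h, if_neg (by rw [h]; exact Fin.zero_ne_one)]; norm_num
    · rw [if_neg h, if_pos (Fin.eq_one_of_ne_zero _ h)]; norm_num
  · intro a m
    rw [hkey a m, Finset.sum_filter,
      ← Equiv.sum_comp finFunctionFinEquiv.symm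
        (fun lam => if lam m = a then τ lam else 0)]
    apply Finset.sum_congr rfl
    intro k _
    dsimp only
    split_ifs <;> simp

end
end
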